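/- arXiv:1202.6437 — 4 statements merged into one kernel-verified Lean document; each statement's English description precedes it below -/
import Mathlib

section
/- Every countable elementary amenable group H embeds (as a subgroup) into a finitely generated elementary amenable group G. -/
universe u

/-- Groups obtained from a class `C` by applying one extension or one directed union. -/
def ObtainedByExtOrUnion (C : ∀ G : Type u, Group G → Prop)
    (G : Type u) (instG : Group G) : Prop :=
  letI := instG
  (∃ N : Subgroup G, ∃ _ : N.Normal, C ↥N inferInstance ∧ C (G ⧸ N) inferInstance) ∨
  (∃ (ι : Type u) (K : ι → Subgroup G), Nonempty ι ∧ Directed (· ≤ ·) K ∧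
      (∀ g : G, ∃ i, g ∈ K i) ∧ ∀ i, C ↥(K i) inferInstance)

/-- The transfinite hierarchy `EG_α`: `EG_0` consists of finite and abelian groups, at successor
stages one applies one extension or one directed union, and at limit stages one takes the union
of the previous stages. -/
noncomputable def EG : Ordinal.{u} → ∀ G : Type u, Group G → Prop := fun α =>
  Ordinal.limitRecOn (motive := fun _ => ∀ G : Type u, Group G → Prop) α
    (fun G _ => Finite G ∨ ∀ a b : G, a * b = b * a)
    (fun _ ih => ObtainedByExtOrUnion ih)
    (fun o _ ih G instG => ∃ β, ∃ hβ : β < o, ih β hβ G instG)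

/-- A group is elementary amenable if it lies in some `EG_α`. -/
def IsElementaryAmenable (G : Type u) [instG : Group G] : Prop := ∃ α, EG α G instG

/-- The elementary class `c(G)`: the least ordinal `α` with `G ∈ EG_α`. -/
noncomputable def elemClass (G : Type u) [instG : Group G] : Ordinal.{u} :=
  sInf {α | EG α G instG}

section EGLemmas

lemma EG_zero (G : Type u) (instG : Group G) :
    EG 0 G instG ↔ (Finite G ∨ ∀ a b : G, a * b = b * a) := by
  simp only [EG, Ordinal.limitRecOn_zero]

lemma EG_succ (o : Ordinal.{u}) (G : Type u) (instG : Group G) :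
    EG (Order.succ o) G instG ↔ ObtainedByExtOrUnion (EG o) G instG := by
  simp only [EG, Ordinal.limitRecOn_succ]

lemma EG_limit {o : Ordinal.{u}} (ho : Order.IsSuccLimit o) (G : Type u) (instG : Group G) :
    EG o G instG ↔ ∃ β, ∃ _ : β < o, EG β G instG := by
  conv_lhs => rw [EG, Ordinal.limitRecOn_limit _ _ _ _ ho]
  rfl

end EGLemmas

theorem EG_congr : ∀ (α : Ordinal.{u}) {G₁ G₂ : Type u} [inst₁ : Group G₁] [inst₂ : Group G₂]
    (e : G₁ ≃* G₂), EG α G₁ inst₁ → EG α G₂ inst₂ := by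
  intro α
  induction α using Ordinal.induction with
  | h α IH =>
    intro G₁ G₂ inst₁ inst₂ e h
    rcases Ordinal.zero_or_succ_or_isSuccLimit α with rfl | ⟨β, rfl⟩ | hl
    · rw [EG_zero] at h ⊢
      rcases h with hf | hc
      · exact Or.inl (Finite.of_equiv _ e.toEquiv)
      · refine Or.inr fun a b => ?_
        have := hc (e.symm a) (e.symm b)
        have h2 := congrArg e this
        simpa [map_mul] using h2
    · rw [EG_succ] at h ⊢
      rcases h with ⟨N, hN, h₁, h₂⟩ | ⟨ι, K, hne, hdir, hcov, hK⟩
      · refine Or.inl ?_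
        refine ⟨Subgroup.comap (e.symm : G₂ →* G₁) N, hN.comap _, ?_, ?_⟩
        · have hmap : Subgroup.map (e : G₁ →* G₂) N =
              Subgroup.comap (e.symm : G₂ →* G₁) N := by
            exact Subgroup.map_equiv_eq_comap_symm e N
          refine IH β (Order.lt_succ β) ?_ h₁
          exact (Subgroup.equivMapOfInjective N (e : G₁ →* G₂) e.injective).trans
            (MulEquiv.subgroupCongr hmap)
        · haveI : N.Normal := hN
          haveI : (Subgroup.comap (e.symm : G₂ →* G₁) N).Normal := hN.comap _
          refine IH β (Order.lt_succ β) ?_ h₂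
          exact QuotientGroup.congr N _ e (Subgroup.map_equiv_eq_comap_symm e N)
      · refine Or.inr ?_
        refine ⟨ι, fun i => Subgroup.map (e : G₁ →* G₂) (K i), hne,
          fun i j => ?_, fun g => ?_, fun i => ?_⟩
        · obtain ⟨k, hk1, hk2⟩ := hdir i j
          exact ⟨k, Subgroup.map_mono hk1, Subgroup.map_mono hk2⟩
        · obtain ⟨i, hi⟩ := hcov (e.symm g)
          exact ⟨i, ⟨e.symm g, hi, by simp⟩⟩
        · exact IH β (Order.lt_succ β)
            (Subgroup.equivMapOfInjective (K i) (e : G₁ →* G₂) e.injective) (hK i)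
    · rw [EG_limit hl] at h ⊢
      obtain ⟨β, hβ, hEG⟩ := h
      exact ⟨β, hβ, IH β hβ e hEG⟩

theorem EG_mono : ∀ (α β : Ordinal.{u}), β ≤ α → ∀ {G : Type u} [instG : Group G],
    EG β G instG → EG α G instG := by
  intro α
  induction α using Ordinal.induction with
  | h α IH =>
    intro β hβα G instG h
    rcases eq_or_lt_of_le hβα with rfl | hlt
    · exact h
    rcases Ordinal.zero_or_succ_or_isSuccLimit α with rfl | ⟨γ, rfl⟩ | hl
    · exact absurd hlt (not_lt_zero (a := β))
    · have hβγ : β ≤ γ := Order.lt_succ_iff.mp hlt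
      have hγ : EG γ G instG := IH γ (Order.lt_succ γ) β hβγ h
      rw [EG_succ]
      refine Or.inr ⟨PUnit, fun _ => ⊤, ⟨PUnit.unit⟩, fun _ _ => ⟨PUnit.unit, le_rfl, le_rfl⟩,
        fun g => ⟨PUnit.unit, Subgroup.mem_top g⟩, fun _ => ?_⟩
      exact EG_congr γ Subgroup.topEquiv.symm hγ
    · rw [EG_limit hl]
      exact ⟨β, hlt, h⟩

section EA

variable {G : Type u} [instG : Group G]

theorem ea_congr {G₂ : Type u} [inst₂ : Group G₂] (e : G ≃* G₂)
    (h : IsElementaryAmenable G) : IsElementaryAmenable G₂ := by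
  obtain ⟨α, hα⟩ := h
  exact ⟨α, EG_congr α e hα⟩

theorem ea_of_comm (h : ∀ a b : G, a * b = b * a) : IsElementaryAmenable G :=
  ⟨0, (EG_zero G instG).mpr (Or.inr h)⟩

theorem ea_of_finite (h : Finite G) : IsElementaryAmenable G :=
  ⟨0, (EG_zero G instG).mpr (Or.inl h)⟩

theorem ea_extension (N : Subgroup G) (hN : N.Normal)
    (h₁ : IsElementaryAmenable ↥N)
    (h₂ : letI := hN; IsElementaryAmenable (G ⧸ N)) : IsElementaryAmenable G := by
  obtain ⟨α, hα⟩ := h₁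
  obtain ⟨β, hβ⟩ := h₂
  refine ⟨Order.succ (α ⊔ β), ?_⟩
  rw [EG_succ]
  refine Or.inl ⟨N, hN, ?_, ?_⟩
  · exact EG_mono _ α le_sup_left hα
  · exact EG_mono _ β le_sup_right hβ

theorem ea_directed {ι : Type u} (K : ι → Subgroup G) (hne : Nonempty ι)
    (hdir : Directed (· ≤ ·) K) (hcov : ∀ g : G, ∃ i, g ∈ K i)
    (hEA : ∀ i, IsElementaryAmenable ↥(K i)) : IsElementaryAmenable G := by
  choose f hf using hEA
  refine ⟨Order.succ (⨆ i, f i), ?_⟩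
  rw [EG_succ]
  exact Or.inr ⟨ι, K, hne, hdir, hcov, fun i => EG_mono _ (f i) (Ordinal.le_iSup f i) (hf i)⟩

theorem ea_hom_ker_range {P : Type u} [Group P] (f : G →* P)
    (hker : IsElementaryAmenable ↥f.ker)
    (hrange : IsElementaryAmenable ↥f.range) : IsElementaryAmenable G := by
  refine ea_extension f.ker inferInstance hker ?_
  exact ea_congr (QuotientGroup.quotientKerEquivRange f).symm hrange

theorem ea_hom_ker_commRange {P : Type v} [Group P] (f : G →* P)
    (hker : IsElementaryAmenable ↥f.ker)
    (hcomm : ∀ x y : ↥f.range, x * y = y * x) : IsElementaryAmenable G := by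
  refine ea_extension f.ker inferInstance hker (ea_of_comm ?_)
  intro a b
  have e := QuotientGroup.quotientKerEquivRange f
  have : e (a * b) = e (b * a) := by
    rw [map_mul, map_mul, hcomm]
  exact e.injective this

theorem ea_hom_ker_comm {P : Type v} [Group P] (f : G →* P)
    (hcomm : ∀ x y : P, x * y = y * x)
    (hker : IsElementaryAmenable ↥f.ker) : IsElementaryAmenable G :=
  ea_hom_ker_commRange f hker (fun x y => Subtype.ext (by simpa using hcomm x.1 y.1))

end EA

section Subgroups

theorem ea_subgroup : ∀ (α : Ordinal.{u}) {G : Type u} [instG : Group G],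
    EG α G instG → ∀ S : Subgroup G, IsElementaryAmenable ↥S := by
  intro α
  induction α using Ordinal.induction with
  | h α IH =>
    intro G instG h S
    rcases Ordinal.zero_or_succ_or_isSuccLimit α with rfl | ⟨β, rfl⟩ | hl
    · rw [EG_zero] at h
      rcases h with hf | hc
      · exact ea_of_finite (Finite.Set.subset _ (Set.subset_univ _))
      · exact ea_of_comm fun a b => Subtype.ext (hc a.1 b.1)
    · rw [EG_succ] at h
      rcases h with ⟨N, hN, h₁, h₂⟩ | ⟨ι, K, hne, hdir, hcov, hK⟩
      · haveI : N.Normal := hN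
        set f : ↥S →* G ⧸ N := (QuotientGroup.mk' N).comp S.subtype with hf
        refine ea_hom_ker_range f ?_ ?_
        · -- kernel is N.subgroupOf S ≃ (N ⊓ S) ≃ (N ⊓ S).subgroupOf N ≤ N
          have hker : f.ker = N.subgroupOf S := by
            ext x
            simp [hf, MonoidHom.mem_ker, Subgroup.mem_subgroupOf,
              QuotientGroup.eq_one_iff]
          have e₁ : ↥f.ker ≃* ↥(N.subgroupOf S) := MulEquiv.subgroupCongr hker
          have e₂ : ↥(N.subgroupOf S) ≃* ↥(Subgroup.map S.subtype (N.subgroupOf S)) :=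
            Subgroup.equivMapOfInjective _ _ S.subtype_injective
          have e₃ : ↥(Subgroup.map S.subtype (N.subgroupOf S)) ≃* ↥(N ⊓ S : Subgroup G) :=
            MulEquiv.subgroupCongr (Subgroup.subgroupOf_map_subtype N S)
          have e₄ : ↥((N ⊓ S).subgroupOf N) ≃* ↥(N ⊓ S : Subgroup G) :=
            Subgroup.subgroupOfEquivOfLe inf_le_left
          have hEA : IsElementaryAmenable ↥((N ⊓ S).subgroupOf N) :=
            IH β (Order.lt_succ β) h₁ ((N ⊓ S).subgroupOf N)
          exact ea_congr (e₄.trans (e₃.symm.trans (e₂.symm.trans e₁.symm))) hEA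
        · exact IH β (Order.lt_succ β) h₂ f.range
      · -- directed union case
        refine ea_directed (fun i => (K i).subgroupOf S) hne ?_ ?_ ?_
        · intro i j
          obtain ⟨k, h1, h2⟩ := hdir i j
          exact ⟨k, Subgroup.comap_mono h1, Subgroup.comap_mono h2⟩
        · intro g
          obtain ⟨i, hi⟩ := hcov g.1
          exact ⟨i, Subgroup.mem_subgroupOf.mpr hi⟩
        · intro i
          have e₂ : ↥((K i).subgroupOf S) ≃* ↥(Subgroup.map S.subtype ((K i).subgroupOf S)) :=
            Subgroup.equivMapOfInjective _ _ S.subtype_injective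
          have e₃ : ↥(Subgroup.map S.subtype ((K i).subgroupOf S)) ≃* ↥(K i ⊓ S : Subgroup G) :=
            MulEquiv.subgroupCongr (Subgroup.subgroupOf_map_subtype (K i) S)
          have e₄ : ↥((K i ⊓ S).subgroupOf (K i)) ≃* ↥(K i ⊓ S : Subgroup G) :=
            Subgroup.subgroupOfEquivOfLe inf_le_left
          have hEA : IsElementaryAmenable ↥((K i ⊓ S).subgroupOf (K i)) :=
            IH β (Order.lt_succ β) (hK i) _
          exact ea_congr (e₄.trans (e₃.symm.trans e₂.symm)) hEA
    · rw [EG_limit hl] at h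
      obtain ⟨β, hβ, hEG⟩ := h
      exact IH β hβ hEG S

theorem ea_subgroup' {G : Type u} [instG : Group G] (h : IsElementaryAmenable G)
    (S : Subgroup G) : IsElementaryAmenable ↥S := by
  obtain ⟨α, hα⟩ := h
  exact ea_subgroup α hα S

theorem ea_of_le {G : Type u} [Group G] {K₁ K₂ : Subgroup G} (hle : K₁ ≤ K₂)
    (h : IsElementaryAmenable ↥K₂) : IsElementaryAmenable ↥K₁ :=
  ea_congr (Subgroup.subgroupOfEquivOfLe hle) (ea_subgroup' h _)

theorem ea_of_injective {G : Type u} {P : Type u} [Group G] [Group P] (f : G →* P)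
    (hf : Function.Injective f) (h : IsElementaryAmenable P) : IsElementaryAmenable G :=
  ea_congr (MonoidHom.ofInjective hf).symm (ea_subgroup' h f.range)

theorem ea_of_directed_le {G : Type u} [Group G] {ι : Type u} (S : Subgroup G)
    (K : ι → Subgroup G) (hne : Nonempty ι) (hle : ∀ i, K i ≤ S)
    (hdir : Directed (· ≤ ·) K) (hcov : ∀ g ∈ S, ∃ i, g ∈ K i)
    (hEA : ∀ i, IsElementaryAmenable ↥(K i)) : IsElementaryAmenable ↥S := by
  refine ea_directed (fun i => (K i).subgroupOf S) hne ?_ ?_ ?_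
  · intro i j
    obtain ⟨k, h1, h2⟩ := hdir i j
    exact ⟨k, Subgroup.comap_mono h1, Subgroup.comap_mono h2⟩
  · intro g
    obtain ⟨i, hi⟩ := hcov g.1 g.2
    exact ⟨i, Subgroup.mem_subgroupOf.mpr hi⟩
  · intro i
    exact ea_congr (Subgroup.subgroupOfEquivOfLe (hle i)).symm (hEA i)

end Subgroups

/-! ## Generic finite-support Pi subgroup lemmas -/

section PiLemmas

variable {C : Type u} [Group C]

def piOn (U : Subgroup C) (s : Finset ℤ) : Subgroup (ℤ → C) where
  carrier := {f | (∀ n, f n ∈ U) ∧ ∀ n ∉ s, f n = 1}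
  one_mem' := ⟨fun _ => one_mem U, fun _ _ => rfl⟩
  mul_mem' := fun {a b} ha hb => ⟨fun n => mul_mem (ha.1 n) (hb.1 n), fun n hn => by
    show a n * b n = 1
    rw [ha.2 n hn, hb.2 n hn, one_mul]⟩
  inv_mem' := fun {a} ha => ⟨fun n => inv_mem (ha.1 n), fun n hn => by
    show (a n)⁻¹ = 1
    rw [ha.2 n hn, inv_one]⟩

lemma mem_piOn {U : Subgroup C} {s : Finset ℤ} {f : ℤ → C} :
    f ∈ piOn U s ↔ (∀ n, f n ∈ U) ∧ ∀ n ∉ s, f n = 1 := Iff.rfl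

def piFin (U : Subgroup C) : Subgroup (ℤ → C) where
  carrier := {f | (∀ n, f n ∈ U) ∧ Set.Finite {n | f n ≠ 1}}
  one_mem' := ⟨fun _ => one_mem U, Set.Finite.subset (Set.finite_empty) (by simp)⟩
  mul_mem' := fun {a b} ha hb => ⟨fun n => mul_mem (ha.1 n) (hb.1 n),
    Set.Finite.subset (ha.2.union hb.2) (by
      intro n hn
      by_contra hc
      simp only [Set.mem_union, Set.mem_setOf_eq, not_or, not_not] at hc
      exact hn (by show a n * b n = 1; rw [hc.1, hc.2, one_mul]))⟩
  inv_mem' := fun {a} ha => ⟨fun n => inv_mem (ha.1 n), Set.Finite.subset ha.2 (by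
    intro n hn
    simp only [Set.mem_setOf_eq] at hn ⊢
    intro hc
    exact hn (by show (a n)⁻¹ = 1; rw [hc, inv_one]))⟩

lemma mem_piFin {U : Subgroup C} {f : ℤ → C} :
    f ∈ piFin U ↔ (∀ n, f n ∈ U) ∧ Set.Finite {n | f n ≠ 1} := Iff.rfl

lemma ea_piOn (U : Subgroup C) (hU : IsElementaryAmenable ↥U) (s : Finset ℤ) :
    IsElementaryAmenable ↥(piOn U s) := by
  classical
  induction s using Finset.induction_on with
  | empty =>
    have hsub : Subsingleton ↥(piOn U ∅) := by
      constructor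
      intro a b
      apply Subtype.ext
      funext n
      rw [a.2.2 n (Finset.notMem_empty n), b.2.2 n (Finset.notMem_empty n)]
    exact ea_of_finite (Finite.of_subsingleton)
  | @insert a s ha IH =>
    set f : ↥(piOn U (insert a s)) →* ↥U :=
      MonoidHom.mk' (fun x => (⟨x.1 a, x.2.1 a⟩ : ↥U)) (fun x y => rfl) with hf
    refine ea_hom_ker_range f ?_ (ea_subgroup' hU f.range)
    have hle : piOn U s ≤ piOn U (insert a s) := by
      intro g hg
      exact ⟨hg.1, fun n hn => hg.2 n (fun hmem => hn (Finset.mem_insert_of_mem hmem))⟩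
    have hker : f.ker = (piOn U s).subgroupOf (piOn U (insert a s)) := by
      ext x
      simp only [MonoidHom.mem_ker, hf, MonoidHom.mk'_apply, Subgroup.mem_subgroupOf]
      constructor
      · intro h
        have h1 : x.1 a = 1 := congrArg Subtype.val h
        refine ⟨x.2.1, fun n hn => ?_⟩
        by_cases hna : n = a
        · rw [hna]; exact h1
        · exact x.2.2 n (by simp [hna, hn])
      · intro h
        exact Subtype.ext (h.2 a ha)
    rw [hker]
    exact ea_congr (Subgroup.subgroupOfEquivOfLe hle).symm (IH)

lemma ea_piFin (U : Subgroup C) (hU : IsElementaryAmenable ↥U) :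
    IsElementaryAmenable ↥(piFin U) := by
  classical
  refine ea_of_directed_le (piFin U) (fun s : ULift.{u} (Finset ℤ) => piOn U s.down)
    ⟨⟨∅⟩⟩ ?_ ?_ ?_ (fun s => ea_piOn U hU s.down)
  · intro s
    intro f hf
    exact ⟨hf.1, Set.Finite.subset s.down.finite_toSet (fun n hn => by
      by_contra hc
      exact hn (hf.2 n hc))⟩
  · intro s t
    refine ⟨⟨s.down ∪ t.down⟩, ?_, ?_⟩ <;>
    · intro f hf
      exact ⟨hf.1, fun n hn => hf.2 n (fun hmem => hn (by simp [hmem]))⟩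
  · intro f hf
    refine ⟨⟨hf.2.toFinset⟩, hf.1, fun n hn => ?_⟩
    by_contra hc
    exact hn (hf.2.mem_toFinset.mpr hc)
end PiLemmas

/-! ## The construction -/

section Construction

variable (H : Type u) [Group H]

/-- Shift automorphism of `ℤ → ℤ → H` by `k = (k₁, k₂)`:
`(shiftA k F) j i = F (j - k.2) (i - k.1)`. -/
def shiftA (k : ℤ × ℤ) : (ℤ → ℤ → H) ≃* (ℤ → ℤ → H) where
  toFun F := fun j i => F (j - k.2) (i - k.1)
  invFun F := fun j i => F (j + k.2) (i + k.1)
  left_inv F := by funext j i; simp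
  right_inv F := by funext j i; simp
  map_mul' F G := rfl

def psiA : Multiplicative (ℤ × ℤ) →* MulAut (ℤ → ℤ → H) where
  toFun k := shiftA H k.toAdd
  map_one' := by
    apply MulEquiv.ext
    intro F
    funext j i
    show F (j - 0) (i - 0) = F j i
    simp
  map_mul' k l := by
    apply MulEquiv.ext
    intro F
    funext j i
    simp only [MulAut.mul_apply, shiftA, MulEquiv.coe_mk, Equiv.coe_fn_mk,
      toAdd_mul, Prod.fst_add, Prod.snd_add, sub_sub]

/-- The inner group `Λ = (ℤ → ℤ → H) ⋊ ℤ²`. -/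
abbrev LamG := SemidirectProduct (ℤ → ℤ → H) (Multiplicative (ℤ × ℤ)) (psiA H)

def shiftB (k : ℤ) : (ℤ → LamG H) ≃* (ℤ → LamG H) where
  toFun F := fun p => F (p - k)
  invFun F := fun p => F (p + k)
  left_inv F := by funext p; simp
  right_inv F := by funext p; simp
  map_mul' F G := rfl

def psiB : Multiplicative ℤ →* MulAut (ℤ → LamG H) where
  toFun k := shiftB H k.toAdd
  map_one' := by
    apply MulEquiv.ext
    intro F
    funext p
    show F (p - 0) = F p
    simp
  map_mul' k l := by
    apply MulEquiv.ext
    intro F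
    funext p
    simp only [MulAut.mul_apply, shiftB, MulEquiv.coe_mk, Equiv.coe_fn_mk,
      toAdd_mul, sub_sub]

/-- The outer ambient group `Γ = (ℤ → Λ) ⋊ ℤ`. -/
abbrev GamG := SemidirectProduct (ℤ → LamG H) (Multiplicative ℤ) (psiB H)

variable (eH : ℤ → H)

/-- The ray `i ↦ h` for `i ≥ 0`, `1` for `i < 0`. -/
def rayBase (h : H) : ℤ → H := fun i => if 0 ≤ i then h else 1

/-- row `m` carries the ray of `eH m`. -/
def VA (m : ℤ) : ℤ → ℤ → H := fun j i => if j = m then rayBase H (eH m) i else 1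

def lampRow (m : ℤ) (h : H) : ℤ → ℤ → H := fun j i => if j = m ∧ i = -1 then h else 1

def b1 : LamG H := SemidirectProduct.inr (Multiplicative.ofAdd ((1 : ℤ), (0 : ℤ)))
def b2 : LamG H := SemidirectProduct.inr (Multiplicative.ofAdd ((0 : ℤ), (1 : ℤ)))

def d0 (x : LamG H) : ℤ → LamG H := fun p => if p = 0 then x else 1

def tG : GamG H := SemidirectProduct.inr (Multiplicative.ofAdd (1 : ℤ))
def FG' : GamG H := SemidirectProduct.inl (fun m => SemidirectProduct.inl (VA H eH m))
def T1 : GamG H := SemidirectProduct.inl (d0 H (b1 H))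
def T2 : GamG H := SemidirectProduct.inl (d0 H (b2 H))

def GrpG : Subgroup (GamG H) := Subgroup.closure {tG H, FG' H eH, T1 H, T2 H}

end Construction

section Computation

open SemidirectProduct

lemma conj_inl {N : Type u} {G' : Type v} [Group N] [Group G'] {φ : G' →* MulAut N}
    (g : G') (n : N) :
    (inr (φ := φ) g)⁻¹ * inl (φ := φ) n * inr (φ := φ) g = inl (φ := φ) ((φ g⁻¹) n) := by
  have h := (inl_aut (φ := φ) g⁻¹ n).symm
  simpa [map_inv, inv_inv] using h

variable (H : Type u) [Group H] (eH : ℤ → H)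

lemma ray_diff (h : H) (i : ℤ) :
    (rayBase H h i)⁻¹ * rayBase H h (i + 1) = if i = -1 then h else 1 := by
  unfold rayBase
  by_cases h1 : i = -1
  · subst h1
    norm_num
  · by_cases h0 : 0 ≤ i
    · rw [if_pos h0, if_pos (by omega), if_neg h1, inv_mul_cancel]
    · rw [if_neg h0, if_neg (by omega), if_neg h1, inv_one, one_mul]

lemma VA_diff (m j i : ℤ) :
    (VA H eH m j i)⁻¹ * VA H eH m j (i + 1) = lampRow H m (eH m) j i := by
  unfold VA lampRow
  by_cases hj : j = m
  · subst hj
    rw [if_pos rfl, if_pos rfl, ray_diff]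
    by_cases h1 : i = -1 <;> simp [h1]
  · simp [hj]

/-- `d0` as a monoid hom. -/
def d0Hom : LamG H →* (ℤ → LamG H) :=
  MonoidHom.mk' (d0 H) (by
    intro a b
    funext p
    by_cases hp : p = 0 <;> simp [d0, hp])

/-- `lampRow m` as a monoid hom. -/
def lampHom (m : ℤ) : H →* (ℤ → ℤ → H) :=
  MonoidHom.mk' (lampRow H m) (by
    intro a b
    funext j i
    by_cases hj : j = m ∧ i = -1 <;> simp [lampRow, hj])

/-- The embedding `H → Γ`. -/
def phi0 : H →* GamG H :=
  (SemidirectProduct.inl).comp ((d0Hom H).comp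
    ((SemidirectProduct.inl (φ := psiA H)).comp (lampHom H 0)))

lemma phi0_apply (h : H) :
    phi0 H h = SemidirectProduct.inl (d0 H (SemidirectProduct.inl (lampRow H 0 h))) := rfl

lemma phi0_injective : Function.Injective (phi0 H) := by
  intro a b hab
  have h1 := congrArg SemidirectProduct.left hab
  simp only [phi0_apply, left_inl] at h1
  have h2 := congrFun h1 0
  simp only [d0, if_pos rfl] at h2
  have h3 := congrArg SemidirectProduct.left h2
  change lampRow H 0 a = lampRow H 0 b at h3
  have h4 := congrFun (congrFun h3 0) (-1)
  simpa [lampRow] using h4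

lemma tG_zpow (m : ℤ) : (tG H) ^ m = inr (Multiplicative.ofAdd m) := by
  rw [tG, ← map_zpow, ← ofAdd_zsmul]
  simp

lemma b2_zpow (m : ℤ) : (b2 H) ^ m = inr (Multiplicative.ofAdd ((0 : ℤ), m)) := by
  rw [b2, ← map_zpow, ← ofAdd_zsmul]
  simp [Prod.smul_def]

lemma T2_zpow (m : ℤ) : (T2 H) ^ m = SemidirectProduct.inl (d0 H ((b2 H) ^ m)) := by
  rw [T2, ← map_zpow]
  congr 1
  show (d0Hom H (b2 H)) ^ m = d0Hom H ((b2 H) ^ m)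
  rw [map_zpow]

/-- The main membership computation. -/
lemma phi0_mem (m : ℤ) : phi0 H (eH m) ∈ GrpG H eH := by
  have ht : tG H ∈ GrpG H eH := Subgroup.subset_closure (by simp [Set.mem_insert_iff])
  have hF : FG' H eH ∈ GrpG H eH := Subgroup.subset_closure (by simp [Set.mem_insert_iff])
  have hT1 : T1 H ∈ GrpG H eH := Subgroup.subset_closure (by simp [Set.mem_insert_iff])
  have hT2 : T2 H ∈ GrpG H eH := Subgroup.subset_closure (by simp [Set.mem_insert_iff])
  -- the word
  set X : GamG H := ((tG H) ^ m)⁻¹ * FG' H eH * (tG H) ^ m with hX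
  set Y : GamG H := X⁻¹ * (T1 H)⁻¹ * X * T1 H with hY
  set Z : GamG H := ((T2 H) ^ m)⁻¹ * Y * (T2 H) ^ m with hZ
  have hXmem : X ∈ GrpG H eH :=
    mul_mem (mul_mem (inv_mem (zpow_mem ht _)) hF) (zpow_mem ht _)
  have hYmem : Y ∈ GrpG H eH :=
    mul_mem (mul_mem (mul_mem (inv_mem hXmem) (inv_mem hT1)) hXmem) hT1
  have hZmem : Z ∈ GrpG H eH :=
    mul_mem (mul_mem (inv_mem (zpow_mem hT2 _)) hYmem) (zpow_mem hT2 _)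
  -- Now show Z = phi0 H (eH m)
  have hXval : X = SemidirectProduct.inl (fun p => SemidirectProduct.inl (VA H eH (p + m))) := by
    rw [hX, tG_zpow, FG', conj_inl]
    congr 1
    funext p
    simp [psiB, shiftB, sub_neg_eq_add]
  have hYval : Y = SemidirectProduct.inl (d0 H
      ((SemidirectProduct.inl (VA H eH m))⁻¹ * (b1 H)⁻¹ *
        SemidirectProduct.inl (VA H eH m) * b1 H)) := by
    rw [hY, hXval, T1, ← map_inv, ← map_inv, ← map_mul, ← map_mul, ← map_mul]
    congr 1
    funext p
    by_cases hp : p = 0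
    · subst hp
      simp [d0]
    · simp [d0, hp, Pi.mul_apply, Pi.inv_apply]
  have hw : (SemidirectProduct.inl (VA H eH m))⁻¹ * (b1 H)⁻¹ *
      SemidirectProduct.inl (VA H eH m) * b1 H =
      SemidirectProduct.inl (φ := psiA H) (lampRow H m (eH m)) := by
    have hconj : (b1 H)⁻¹ * SemidirectProduct.inl (VA H eH m) * b1 H =
        SemidirectProduct.inl (φ := psiA H) (fun j i => VA H eH m j (i + 1)) := by
      rw [b1, conj_inl]
      congr 1
      funext j i
      simp [psiA, shiftA, sub_neg_eq_add]
    rw [mul_assoc, mul_assoc, ← mul_assoc ((b1 H)⁻¹), hconj, ← map_inv, ← map_mul]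
    congr 1
    funext j i
    exact VA_diff H eH m j i
  have hZval : Z = phi0 H (eH m) := by
    rw [hZ, hYval, hw, T2_zpow, ← map_inv, ← map_mul, ← map_mul, phi0_apply]
    congr 1
    funext p
    by_cases hp : p = 0
    · subst hp
      simp only [Pi.mul_apply, Pi.inv_apply, d0, if_pos rfl, eq_self_iff_true, if_true]
      rw [b2_zpow, conj_inl]
      congr 1
      funext j i
      simp only [psiA, shiftA, MonoidHom.coe_mk, OneHom.coe_mk, MulEquiv.coe_mk, Equiv.coe_fn_mk,
        toAdd_inv, toAdd_ofAdd, Prod.fst_neg, Prod.snd_neg, neg_zero, sub_zero, sub_neg_eq_add,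
        lampRow]
      by_cases hj : j = 0
      · subst hj
        simp
      · rw [if_neg (by omega), if_neg (by omega)]
    · simp [d0, hp, Pi.mul_apply, Pi.inv_apply]
  rw [← hZval]
  exact hZmem
end Computation

section Amen

open SemidirectProduct

lemma ea_of_injective_le {G P : Type u} [Group G] [Group P] (f : G →* P)
    (hf : Function.Injective f) {U : Subgroup P} (hle : f.range ≤ U)
    (hU : IsElementaryAmenable ↥U) : IsElementaryAmenable G :=
  ea_congr (MonoidHom.ofInjective hf).symm (ea_of_le hle hU)

variable (H : Type u) [Group H]

def Mrow : Subgroup (ℤ → H) where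
  carrier := {f | (∃ (N : ℤ) (c : H), ∀ n, N ≤ n → f n = c) ∧ ∃ N : ℤ, ∀ n, n < N → f n = 1}
  one_mem' := ⟨⟨0, 1, fun _ _ => rfl⟩, ⟨0, fun _ _ => rfl⟩⟩
  mul_mem' := by
    rintro a b ⟨⟨N₁, c₁, h₁⟩, ⟨M₁, g₁⟩⟩ ⟨⟨N₂, c₂, h₂⟩, ⟨M₂, g₂⟩⟩
    refine ⟨⟨max N₁ N₂, c₁ * c₂, fun n hn => ?_⟩, ⟨min M₁ M₂, fun n hn => ?_⟩⟩
    · show a n * b n = c₁ * c₂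
      rw [h₁ n (le_trans (le_max_left _ _) hn), h₂ n (le_trans (le_max_right _ _) hn)]
    · show a n * b n = 1
      rw [g₁ n (lt_of_lt_of_le hn (min_le_left _ _)),
        g₂ n (lt_of_lt_of_le hn (min_le_right _ _)), one_mul]
  inv_mem' := by
    rintro a ⟨⟨N, c, h⟩, ⟨M, g⟩⟩
    refine ⟨⟨N, c⁻¹, fun n hn => ?_⟩, ⟨M, fun n hn => ?_⟩⟩
    · show (a n)⁻¹ = c⁻¹
      rw [h n hn]
    · show (a n)⁻¹ = 1
      rw [g n hn, inv_one]

lemma rayBase_mem_Mrow (h : H) : rayBase H h ∈ Mrow H :=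
  ⟨⟨0, h, fun n hn => if_pos hn⟩, ⟨0, fun n hn => if_neg (by omega)⟩⟩

noncomputable def toGermHom : (ℤ → H) →* Filter.Germ (Filter.atTop : Filter ℤ) H :=
  MonoidHom.mk' (fun f => (f : Filter.Germ (Filter.atTop : Filter ℤ) H))
    (fun _ _ => rfl)

noncomputable def constGermHom : H →* Filter.Germ (Filter.atTop : Filter ℤ) H :=
  (toGermHom H).comp (Pi.constMonoidHom ℤ H)

lemma constGermHom_injective : Function.Injective (constGermHom H) := by
  intro a b hab
  have : ((fun _ : ℤ => a) : Filter.Germ (Filter.atTop : Filter ℤ) H) = fun _ : ℤ => b := hab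
  rw [Filter.Germ.coe_eq] at this
  exact Filter.const_eventuallyEq.mp this

lemma ea_Mrow (hea : IsElementaryAmenable H) : IsElementaryAmenable ↥(Mrow H) := by
  set τ := (toGermHom H).comp (Mrow H).subtype with hτ
  refine ea_hom_ker_range τ ?_ ?_
  · -- kernel: eventually 1 on both sides, so finitely supported
    refine ea_of_injective_le ((Mrow H).subtype.comp τ.ker.subtype)
      (Subtype.val_injective.comp Subtype.val_injective) (U := piFin (⊤ : Subgroup H)) ?_
      (ea_piFin _ (ea_congr Subgroup.topEquiv.symm hea))
    rintro x ⟨y, rfl⟩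
    refine ⟨fun n => Subgroup.mem_top _, ?_⟩
    have hg : (y.1.1 : ℤ → H) =ᶠ[Filter.atTop] (1 : ℤ → H) := by
      rw [← Filter.Germ.coe_eq]
      exact y.2
    obtain ⟨a, ha⟩ := Filter.eventually_atTop.mp hg
    obtain ⟨_, ⟨N, hN⟩⟩ := y.1.2
    refine Set.Finite.subset (Set.finite_Ico N a) ?_
    intro n hn
    simp only [Set.mem_setOf_eq] at hn
    simp only [Set.mem_Ico]
    constructor
    · by_contra hc
      exact hn (hN n (by omega))
    · by_contra hc
      exact hn (ha n (by omega))
  · -- range: constant germs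
    have hle : τ.range ≤ (constGermHom H).range := by
      rintro x ⟨y, rfl⟩
      obtain ⟨⟨N, c, hN⟩, _⟩ := y.2
      refine ⟨c, ?_⟩
      show ((fun _ : ℤ => c) : Filter.Germ (Filter.atTop : Filter ℤ) H) = (y.1 : ℤ → H)
      rw [Filter.Germ.coe_eq]
      exact Filter.eventually_atTop.mpr ⟨N, fun n hn => (hN n hn).symm⟩
    exact ea_of_le hle (ea_congr (MonoidHom.ofInjective (constGermHom_injective H)) hea)

lemma psiA_apply (k : Multiplicative (ℤ × ℤ)) (F : ℤ → ℤ → H) (j i : ℤ) :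
    psiA H k F j i = F (j - k.toAdd.2) (i - k.toAdd.1) := rfl

lemma psiB_apply (k : Multiplicative ℤ) (F : ℤ → LamG H) (p : ℤ) :
    psiB H k F p = F (p - k.toAdd) := rfl

lemma Mrow_shift {f : ℤ → H} (hf : f ∈ Mrow H) (a : ℤ) :
    (fun i => f (i - a)) ∈ Mrow H := by
  obtain ⟨⟨N, c, hN⟩, ⟨M, hM⟩⟩ := hf
  exact ⟨⟨N + a, c, fun n hn => hN _ (by omega)⟩, ⟨M + a, fun n hn => hM _ (by omega)⟩⟩

lemma psiA_mem_M2 (k : Multiplicative (ℤ × ℤ)) {F : ℤ → ℤ → H}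
    (hF : F ∈ piFin (Mrow H)) : psiA H k F ∈ piFin (Mrow H) := by
  refine ⟨fun j => Mrow_shift H (hF.1 _) _, ?_⟩
  have hsub : {j | psiA H k F j ≠ 1} ⊆ (fun j => j - k.toAdd.2) ⁻¹' {j | F j ≠ 1} := by
    intro j hj
    simp only [Set.mem_preimage, Set.mem_setOf_eq]
    intro hc
    apply hj
    funext i
    show F (j - k.toAdd.2) (i - k.toAdd.1) = 1
    rw [hc]
    rfl
  exact Set.Finite.subset (Set.Finite.preimage (Set.injOn_of_injective
    (fun x y hxy => by omega)) hF.2) hsub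

def Lsub : Subgroup (LamG H) where
  carrier := {x | x.left ∈ piFin (Mrow H)}
  one_mem' := by
    show (1 : LamG H).left ∈ piFin (Mrow H)
    rw [SemidirectProduct.one_left]
    exact one_mem _
  mul_mem' := by
    intro a b ha hb
    show (a * b).left ∈ piFin (Mrow H)
    rw [SemidirectProduct.mul_left]
    exact mul_mem ha (psiA_mem_M2 H _ hb)
  inv_mem' := by
    intro a ha
    show a⁻¹.left ∈ piFin (Mrow H)
    rw [SemidirectProduct.inv_left]
    exact psiA_mem_M2 H _ (inv_mem ha)

lemma ea_Lsub (hea : IsElementaryAmenable H) : IsElementaryAmenable ↥(Lsub H) := by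
  set r := (SemidirectProduct.rightHom).comp (Lsub H).subtype with hr
  refine ea_hom_ker_comm r (fun x y => mul_comm x y) ?_
  have hright : ∀ x : ↥r.ker, (x.1.1 : LamG H).right = 1 := by
    intro x
    have := x.2
    simp only [MonoidHom.mem_ker, hr, MonoidHom.comp_apply] at this
    rwa [← SemidirectProduct.rightHom_eq_right]
  set f : ↥r.ker →* (ℤ → ℤ → H) := MonoidHom.mk' (fun x => (x.1.1 : LamG H).left)
    (by
      intro a b
      show ((a.1.1 : LamG H) * (b.1.1 : LamG H)).left = _
      rw [SemidirectProduct.mul_left, hright a, map_one]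
      rfl) with hf
  refine ea_of_injective_le f ?_ (U := piFin (Mrow H)) ?_ (ea_piFin _ (ea_Mrow H hea))
  · intro a b hab
    apply Subtype.ext
    apply Subtype.ext
    apply SemidirectProduct.ext
    · exact hab
    · rw [hright a, hright b]
  · rintro x ⟨y, rfl⟩
    exact y.1.2

def Vsub (eH : ℤ → H) : Subgroup (LamG H) where
  carrier := {x | x.right = 1 ∧ ∀ j, ∃ k : ℤ, x.left j = rayBase H (eH j) ^ k}
  one_mem' := by
    refine ⟨SemidirectProduct.one_right, fun j => ⟨0, ?_⟩⟩
    rw [SemidirectProduct.one_left, zpow_zero]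
    rfl
  mul_mem' := by
    rintro a b ⟨ha1, ha2⟩ ⟨hb1, hb2⟩
    refine ⟨by rw [SemidirectProduct.mul_right, ha1, hb1, one_mul], fun j => ?_⟩
    obtain ⟨k₁, hk₁⟩ := ha2 j
    obtain ⟨k₂, hk₂⟩ := hb2 j
    refine ⟨k₁ + k₂, ?_⟩
    rw [SemidirectProduct.mul_left, ha1, map_one]
    show a.left j * b.left j = _
    rw [hk₁, hk₂, zpow_add]
  inv_mem' := by
    rintro a ⟨ha1, ha2⟩
    refine ⟨by rw [SemidirectProduct.inv_right, ha1, inv_one], fun j => ?_⟩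
    obtain ⟨k, hk⟩ := ha2 j
    refine ⟨-k, ?_⟩
    rw [SemidirectProduct.inv_left, ha1, inv_one, map_one]
    show (a.left)⁻¹ j = _
    show (a.left j)⁻¹ = _
    rw [hk, ← zpow_neg]

lemma Vsub_comm (eH : ℤ → H) {x y : LamG H} (hx : x ∈ Vsub H eH) (hy : y ∈ Vsub H eH) :
    x * y = y * x := by
  apply SemidirectProduct.ext
  · rw [SemidirectProduct.mul_left, SemidirectProduct.mul_left, hx.1, hy.1]
    simp only [map_one, MulAut.one_apply]
    show x.left * y.left = y.left * x.left
    funext j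
    obtain ⟨k₁, hk₁⟩ := hx.2 j
    obtain ⟨k₂, hk₂⟩ := hy.2 j
    show x.left j * y.left j = y.left j * x.left j
    rw [hk₁, hk₂, zpow_mul_comm]
  · rw [SemidirectProduct.mul_right, SemidirectProduct.mul_right, hx.1, hy.1]

def Wsub (eH : ℤ → H) : Subgroup (GamG H) where
  carrier := {γ | (∀ p, γ.left p ∈ Lsub H) ∧ Set.Finite {p | γ.left p ∉ Vsub H eH}}
  one_mem' := by
    constructor
    · intro p
      rw [SemidirectProduct.one_left]
      exact one_mem _
    · refine Set.Finite.subset (Set.finite_empty) ?_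
      intro p hp
      simp only [Set.mem_setOf_eq, SemidirectProduct.one_left] at hp
      exact absurd (one_mem _) hp
  mul_mem' := by
    rintro a b ⟨haL, haV⟩ ⟨hbL, hbV⟩
    constructor
    · intro p
      rw [SemidirectProduct.mul_left]
      show a.left p * psiB H a.right b.left p ∈ Lsub H
      rw [psiB_apply]
      exact mul_mem (haL p) (hbL _)
    · refine Set.Finite.subset (haV.union (Set.Finite.preimage
        (Set.injOn_of_injective (sub_left_injective (b := Multiplicative.toAdd a.right))) hbV)) ?_
      intro p hp
      simp only [Set.mem_setOf_eq, Set.mem_union, Set.mem_preimage] at hp ⊢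
      by_contra hc
      push_neg at hc
      apply hp
      rw [SemidirectProduct.mul_left]
      show a.left p * psiB H a.right b.left p ∈ Vsub H eH
      rw [psiB_apply]
      exact mul_mem hc.1 hc.2
  inv_mem' := by
    rintro a ⟨haL, haV⟩
    constructor
    · intro p
      rw [SemidirectProduct.inv_left]
      show psiB H a.right⁻¹ (a.left)⁻¹ p ∈ Lsub H
      rw [psiB_apply]
      exact inv_mem (haL _)
    · refine Set.Finite.subset (Set.Finite.preimage
        (Set.injOn_of_injective (sub_left_injective (b := Multiplicative.toAdd a.right⁻¹))) haV) ?_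
      intro p hp
      simp only [Set.mem_setOf_eq, Set.mem_preimage] at hp ⊢
      by_contra hc
      apply hp
      rw [SemidirectProduct.inv_left]
      show psiB H a.right⁻¹ (a.left)⁻¹ p ∈ Vsub H eH
      rw [psiB_apply]
      show ((a.left) (p - (Multiplicative.toAdd a.right⁻¹)))⁻¹ ∈ Vsub H eH
      exact inv_mem hc

variable (eH : ℤ → H)

lemma tG_mem_W : tG H ∈ Wsub H eH := by
  constructor
  · intro p
    show (SemidirectProduct.inr _ : GamG H).left p ∈ Lsub H
    rw [SemidirectProduct.left_inr]
    exact one_mem _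
  · refine Set.Finite.subset (Set.finite_empty) ?_
    intro p hp
    simp only [Set.mem_setOf_eq, SemidirectProduct.left_inr] at hp
    exact absurd (one_mem _) hp

lemma FG'_mem_W : FG' H eH ∈ Wsub H eH := by
  have hV : ∀ p : ℤ, (FG' H eH).left p ∈ Vsub H eH := by
    intro p
    rw [FG', SemidirectProduct.left_inl]
    constructor
    · rw [SemidirectProduct.right_inl]
    · intro j
      rw [SemidirectProduct.left_inl]
      by_cases hj : j = p
      · subst hj
        refine ⟨1, ?_⟩
        rw [zpow_one]
        funext i
        simp [VA]
      · refine ⟨0, ?_⟩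
        rw [zpow_zero]
        funext i
        simp [VA, hj]
  constructor
  · intro p
    rw [FG', SemidirectProduct.left_inl]
    show (SemidirectProduct.inl (VA H eH p) : LamG H) ∈ Lsub H
    show (SemidirectProduct.inl (VA H eH p) : LamG H).left ∈ piFin (Mrow H)
    rw [SemidirectProduct.left_inl]
    constructor
    · intro j
      by_cases hj : j = p
      · subst hj
        have : VA H eH j j = rayBase H (eH j) := by
          funext i
          simp [VA]
        show VA H eH j j ∈ Mrow H
        rw [this]
        exact rayBase_mem_Mrow H _
      · show VA H eH p j ∈ Mrow H
        have : VA H eH p j = 1 := by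
          funext i
          simp [VA, hj]
        rw [this]
        exact one_mem _
    · refine Set.Finite.subset (Set.finite_singleton p) ?_
      intro j hj
      simp only [Set.mem_setOf_eq, Set.mem_singleton_iff] at hj ⊢
      by_contra hc
      apply hj
      funext i
      simp [VA, hc]
  · refine Set.Finite.subset (Set.finite_empty) ?_
    intro p hp
    exact absurd (hV p) hp

lemma d0_gen_mem_W (x : LamG H) (hx : x ∈ Lsub H) :
    (SemidirectProduct.inl (d0 H x) : GamG H) ∈ Wsub H eH := by
  constructor
  · intro p
    rw [SemidirectProduct.left_inl]
    by_cases hp : p = 0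
    · subst hp
      show d0 H x 0 ∈ Lsub H
      simp only [d0, if_pos rfl]
      exact hx
    · show d0 H x p ∈ Lsub H
      simp only [d0, if_neg hp]
      exact one_mem _
  · refine Set.Finite.subset (Set.finite_singleton 0) ?_
    intro p hp
    simp only [Set.mem_setOf_eq, SemidirectProduct.left_inl, Set.mem_singleton_iff] at hp ⊢
    by_contra hc
    apply hp
    show d0 H x p ∈ Vsub H eH
    simp only [d0, if_neg hc]
    exact one_mem _

lemma b1_mem_L : b1 H ∈ Lsub H := by
  show (b1 H).left ∈ piFin (Mrow H)
  rw [b1, SemidirectProduct.left_inr]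
  exact one_mem _

lemma b2_mem_L : b2 H ∈ Lsub H := by
  show (b2 H).left ∈ piFin (Mrow H)
  rw [b2, SemidirectProduct.left_inr]
  exact one_mem _

lemma GrpG_le_W : GrpG H eH ≤ Wsub H eH := by
  rw [GrpG, Subgroup.closure_le]
  rintro x hx
  simp only [Set.mem_insert_iff, Set.mem_singleton_iff] at hx
  rcases hx with rfl | rfl | rfl | rfl
  · exact tG_mem_W H eH
  · exact FG'_mem_W H eH
  · exact d0_gen_mem_W H eH _ (b1_mem_L H)
  · exact d0_gen_mem_W H eH _ (b2_mem_L H)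

instance piFinTop_normal {C : Type u} [Group C] : (piFin (⊤ : Subgroup C)).Normal := by
  constructor
  intro f hf g
  refine ⟨fun n => Subgroup.mem_top _, ?_⟩
  refine Set.Finite.subset hf.2 ?_
  intro n hn
  simp only [Set.mem_setOf_eq] at hn ⊢
  intro hc
  apply hn
  show g n * f n * (g n)⁻¹ = 1
  rw [hc, mul_one, mul_inv_cancel]

lemma fg_GrpG : Group.FG ↥(GrpG H eH) := by
  rw [Group.fg_iff_subgroup_fg]
  rw [Subgroup.fg_iff]
  exact ⟨{tG H, FG' H eH, T1 H, T2 H}, rfl, Set.toFinite _⟩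

theorem ea_GrpG (hea : IsElementaryAmenable H) :
    IsElementaryAmenable ↥(GrpG H eH) := by
  have hGW : GrpG H eH ≤ Wsub H eH := GrpG_le_W H eH
  set Gg := GrpG H eH with hGg
  set r₁ := (SemidirectProduct.rightHom).comp Gg.subtype with hr₁
  refine ea_hom_ker_comm r₁ (fun x y => mul_comm x y) ?_
  have hright : ∀ x : ↥r₁.ker, (x.1.1 : GamG H).right = 1 := by
    intro x
    have hx := x.2
    simp only [MonoidHom.mem_ker, hr₁, MonoidHom.comp_apply,
      SemidirectProduct.rightHom_eq_right] at hx
    exact hx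
  set leftB : ↥r₁.ker →* (ℤ → LamG H) := MonoidHom.mk' (fun x => (x.1.1 : GamG H).left)
    (by
      intro a b
      show ((a.1.1 : GamG H) * (b.1.1 : GamG H)).left = _
      rw [SemidirectProduct.mul_left, hright a, map_one]
      simp only [MulAut.one_apply]) with hleftB
  set β := (QuotientGroup.mk' (piFin (⊤ : Subgroup (LamG H)))).comp leftB with hβ
  refine ea_hom_ker_commRange β ?_ ?_
  · set f : ↥β.ker →* (ℤ → LamG H) := MonoidHom.mk' (fun x => (x.1.1.1 : GamG H).left)
      (by
        intro a b
        show ((a.1.1.1 : GamG H) * (b.1.1.1 : GamG H)).left = _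
        rw [SemidirectProduct.mul_left, hright a.1, map_one]
        simp only [MulAut.one_apply]) with hf
    refine ea_of_injective_le f ?_ (U := piFin (Lsub H)) ?_ (ea_piFin _ (ea_Lsub H hea))
    · intro a b hab
      apply Subtype.ext
      apply Subtype.ext
      apply Subtype.ext
      apply SemidirectProduct.ext
      · exact hab
      · rw [hright a.1, hright b.1]
    · rintro x ⟨y, rfl⟩
      constructor
      · intro p
        exact (hGW y.1.1.2).1 p
      · have hy := y.2
        simp only [MonoidHom.mem_ker, hβ, MonoidHom.comp_apply,
          QuotientGroup.mk'_apply] at hy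
        exact ((QuotientGroup.eq_one_iff _).mp hy).2
  · rintro ⟨u, x, rfl⟩ ⟨v, y, rfl⟩
    apply Subtype.ext
    show β x * β y = β y * β x
    simp only [hβ, MonoidHom.comp_apply, QuotientGroup.mk'_apply]
    rw [← QuotientGroup.mk_mul, ← QuotientGroup.mk_mul, QuotientGroup.eq]
    refine ⟨fun n => Subgroup.mem_top _, ?_⟩
    have hxV := (hGW x.1.2).2
    have hyV := (hGW y.1.2).2
    refine Set.Finite.subset (hxV.union hyV) ?_
    intro p hp
    simp only [Set.mem_setOf_eq, Set.mem_union] at hp ⊢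
    by_contra hc
    push_neg at hc
    apply hp
    show ((leftB x * leftB y)⁻¹ * (leftB y * leftB x)) p = 1
    have hcomm : leftB x p * leftB y p = leftB y p * leftB x p := by
      have h1 : leftB x p ∈ Vsub H eH := hc.1
      have h2 : leftB y p ∈ Vsub H eH := hc.2
      exact Vsub_comm H eH h1 h2
    show ((leftB x * leftB y) p)⁻¹ * (leftB y p * leftB x p) = 1
    show ((leftB x) p * (leftB y) p)⁻¹ * (leftB y p * leftB x p) = 1
    rw [← hcomm, inv_mul_cancel]

end Amen

/-- Every countable elementary amenable group embeds into a finitely generated elementary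
amenable group. -/
theorem countable_elementary_amenable_embeds_in_fg (H : Type u) [Group H]
    (hc : Countable H) (hea : IsElementaryAmenable H) :
    ∃ (G : Type u) (instG : Group G), Group.FG G ∧ IsElementaryAmenable G ∧
      ∃ φ : H →* G, Function.Injective φ := by
  haveI : Nonempty H := ⟨1⟩
  obtain ⟨e, he⟩ := exists_surjective_nat H
  set eH : ℤ → H := fun m => e m.toNat with heH
  refine ⟨↥(GrpG H eH), inferInstance, fg_GrpG H eH, ea_GrpG H eH hea, ?_⟩
  have hmem : ∀ h : H, phi0 H h ∈ GrpG H eH := by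
    intro h
    obtain ⟨n, rfl⟩ := he h
    have hn : e n = eH (n : ℤ) := by simp [heH]
    rw [hn]
    exact phi0_mem H eH _
  refine ⟨(phi0 H).codRestrict (GrpG H eH) hmem, ?_⟩
  intro a b hab
  apply phi0_injective H
  exact congrArg Subtype.val hab
end

section
/- Let H be a group with a length function ℓ and a generating family (h_i)_{i∈I}, F the free group with basis (x_i)_{i∈I}, A the free abelian group with basis (a_i)_{i∈I}, and V = A ≀ H the restricted wreath product with base subgroup W. Set l_i = max(ℓ(h_i), 1) and let μ : F → V be the generalized Magnus homomorphism determined by μ(x_i) = a_i^{l_i} h_i. If f ∈ F and μ(f) = w·g with w ∈ W and g ∈ H, then ℓ(g) ≤ ‖w‖. -/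
/-- `ℓ` is a length function on the group `H`. -/
def IsLengthFunction {H : Type*} [Group H] (ℓ : H → ℕ) : Prop :=
  (∀ h : H, ℓ h = 0 ↔ h = 1) ∧ (∀ h : H, ℓ h⁻¹ = ℓ h) ∧ ∀ g h : H, ℓ (g * h) ≤ ℓ g + ℓ h

/-- The additive automorphism of the base `H →₀ A` of a wreath product given by right
translation of the domain: `(b ∘ f)(x) = f (x * b)`. -/
noncomputable def wreathShift {H : Type*} [Group H] {A : Type*} [AddCommGroup A] (b : H) :
    (H →₀ A) ≃+ (H →₀ A) := Finsupp.domCongr (Equiv.mulRight b).symm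

@[simp] theorem wreathShift_apply {H : Type*} [Group H] {A : Type*} [AddCommGroup A]
    (b : H) (f : H →₀ A) (x : H) : wreathShift b f x = f (x * b) := by
  simp [wreathShift, Finsupp.domCongr_apply]

/-- The action of `H` on the (multiplicative) base of the wreath product `A ≀ H`. -/
noncomputable def wreathAction (H : Type*) [Group H] (A : Type*) [AddCommGroup A] :
    H →* MulAut (Multiplicative (H →₀ A)) where
  toFun b := AddEquiv.toMultiplicative (wreathShift b)
  map_one' := by
    refine MulEquiv.ext fun f => ?_
    refine Finsupp.ext fun x => ?_
    show Finsupp.equivMapDomain (Equiv.mulRight (1 : H)).symm (Multiplicative.toAdd f) x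
        = (Multiplicative.toAdd f) x
    simp [Finsupp.equivMapDomain_apply]
  map_mul' := by
    intro a b
    refine MulEquiv.ext fun f => ?_
    refine Finsupp.ext fun x => ?_
    show Finsupp.equivMapDomain (Equiv.mulRight (a * b)).symm (Multiplicative.toAdd f) x
        = Finsupp.equivMapDomain (Equiv.mulRight a).symm
            (Finsupp.equivMapDomain (Equiv.mulRight b).symm (Multiplicative.toAdd f)) x
    simp [Finsupp.equivMapDomain_apply, mul_assoc]

/-- The wreath product `A ≀ H` of an additive abelian group `A` (the lamp group, written
multiplicatively) by a group `H`, realized as a semidirect product of the base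
`H →₀ A` by `H`. -/
noncomputable def WreathProd (A : Type*) [AddCommGroup A] (H : Type*) [Group H] :=
  (Multiplicative (H →₀ A)) ⋊[wreathAction H A] H

noncomputable instance (A : Type*) [AddCommGroup A] (H : Type*) [Group H] :
    Group (WreathProd A H) :=
  inferInstanceAs (Group ((Multiplicative (H →₀ A)) ⋊[wreathAction H A] H))

/-- The embedding of the base into the wreath product. -/
noncomputable def wreathBase {A : Type*} [AddCommGroup A] {H : Type*} [Group H]
    (w : H →₀ A) : WreathProd A H :=
  SemidirectProduct.inl (Multiplicative.ofAdd w)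

/-- The embedding of `H` into the wreath product. -/
noncomputable def wreathRight {A : Type*} [AddCommGroup A] {H : Type*} [Group H]
    (h : H) : WreathProd A H :=
  SemidirectProduct.inr h

/-- The norm `‖w‖` of an element of the base of `A ≀ H`, where `A` is free abelian with basis
indexed by `I`: the sum of the absolute values of all the integer coefficients. -/
noncomputable def baseNorm {H I : Type*} (w : H →₀ (I →₀ ℤ)) : ℕ :=
  w.sum fun _ t => t.sum fun _ k => k.natAbs


section MagnusAux

variable {H : Type} [Group H] {I : Type}

/-- A linear functional on the base of the wreath product given by coefficients. -/
noncomputable def magnusD (coef : H → I → ℚ) : (H →₀ (I →₀ ℤ)) →ₗ[ℤ] ℚ :=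
  Finsupp.lsum ℤ fun u => Finsupp.lsum ℤ fun i => LinearMap.toSpanSingleton ℤ ℚ (coef u i)

omit [Group H] in
theorem magnusD_single (coef : H → I → ℚ) (u : H) (i : I) (k : ℤ) :
    magnusD coef (Finsupp.single u (Finsupp.single i k)) = k * coef u i := by
  simp [magnusD, Finsupp.lsum_single, LinearMap.toSpanSingleton_apply, zsmul_eq_mul]

theorem magnusD_shift (coef : H → I → ℚ) (b : H) (w : H →₀ (I →₀ ℤ)) :
    magnusD coef (wreathShift b w) = magnusD (fun u => coef (u * b⁻¹)) w := by
  induction w using Finsupp.induction with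
  | zero => simp
  | single_add u t w hu ht ih =>
    rw [map_add, map_add, ih, map_add]
    congr 1
    show magnusD coef (Finsupp.equivMapDomain (Equiv.mulRight b).symm (Finsupp.single u t)) = _
    rw [Finsupp.equivMapDomain_single]
    simp only [magnusD, Finsupp.lsum_single]
    rfl

omit [Group H] in
theorem magnusD_bound (coef : H → I → ℚ) (hc : ∀ u i, |coef u i| ≤ 1)
    (w : H →₀ (I →₀ ℤ)) : |magnusD coef w| ≤ (baseNorm w : ℚ) := by
  rw [magnusD, Finsupp.lsum_apply]
  have : (baseNorm w : ℚ) = w.sum fun u t => t.sum fun i k => (|k| : ℚ) := by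
    rw [baseNorm, Finsupp.sum, Finsupp.sum, Nat.cast_sum]
    refine Finset.sum_congr rfl fun u _ => ?_
    rw [Finsupp.sum, Finsupp.sum, Nat.cast_sum]
    refine Finset.sum_congr rfl fun i _ => ?_
    push_cast [Nat.cast_natAbs]
    rfl
  rw [this, Finsupp.sum]
  refine (Finset.abs_sum_le_sum_abs _ _).trans (Finset.sum_le_sum fun u _ => ?_)
  rw [Finsupp.lsum_apply, Finsupp.sum]
  refine (Finset.abs_sum_le_sum_abs _ _).trans ?_
  simp only [Finsupp.sum]
  refine Finset.sum_le_sum fun i _ => ?_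
  rw [LinearMap.toSpanSingleton_apply, zsmul_eq_mul, abs_mul]
  calc |((w u) i : ℚ)| * |coef u i| ≤ |((w u) i : ℚ)| * 1 :=
        mul_le_mul_of_nonneg_left (hc u i) (abs_nonneg _)
    _ = |((w u) i : ℚ)| := mul_one _

/-- The coefficients used in the potential-function argument. -/
noncomputable def magnusCoef (ℓ : H → ℕ) (h : I → H) (c : H) : H → I → ℚ := fun u i =>
  ((ℓ ((h i)⁻¹ * (u * c)) : ℚ) - (ℓ (u * c) : ℚ)) / ((max (ℓ (h i)) 1 : ℤ) : ℚ)

theorem magnusCoef_shift (ℓ : H → ℕ) (h : I → H) (c b : H) :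
    (fun u => magnusCoef ℓ h c (u * b)) = magnusCoef ℓ h (b * c) := by
  funext u i
  simp only [magnusCoef, mul_assoc]

/-- The generalized Magnus homomorphism, valued in the underlying semidirect product. -/
noncomputable def magnusHom (ℓ : H → ℕ) (h : I → H) :
    FreeGroup I →* Multiplicative (H →₀ (I →₀ ℤ)) ⋊[wreathAction H (I →₀ ℤ)] H :=
  FreeGroup.lift fun i => wreathBase (Finsupp.single (1 : H)
      (Finsupp.single i (max (ℓ (h i)) 1 : ℤ))) * wreathRight (h i)

/-- The key invariant satisfied by every element of the image of the Magnus homomorphism. -/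
def MagnusP (ℓ : H → ℕ) (h : I → H)
    (p : Multiplicative (H →₀ (I →₀ ℤ)) ⋊[wreathAction H (I →₀ ℤ)] H) : Prop :=
  ∀ c : H, magnusD (magnusCoef ℓ h c) (Multiplicative.toAdd p.left)
    = (ℓ (p.right⁻¹ * c) : ℚ) - (ℓ c : ℚ)

theorem magnusP_mul (ℓ : H → ℕ) (h : I → H) {p q}
    (hp : MagnusP ℓ h p) (hq : MagnusP ℓ h q) : MagnusP ℓ h (p * q) := by
  intro c
  have hleft : Multiplicative.toAdd (p * q).left
      = Multiplicative.toAdd p.left + wreathShift p.right (Multiplicative.toAdd q.left) := rfl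
  rw [hleft, map_add, magnusD_shift, magnusCoef_shift, hp c, hq (p.right⁻¹ * c)]
  rw [SemidirectProduct.mul_right, mul_inv_rev, mul_assoc]
  ring

theorem magnusP_inv (ℓ : H → ℕ) (h : I → H) {p}
    (hp : MagnusP ℓ h p) : MagnusP ℓ h p⁻¹ := by
  intro c
  have hleft : Multiplicative.toAdd (p⁻¹).left
      = wreathShift p.right⁻¹ (-(Multiplicative.toAdd p.left)) := rfl
  rw [hleft, magnusD_shift, inv_inv, magnusCoef_shift, map_neg, hp (p.right * c)]
  rw [SemidirectProduct.inv_right, inv_inv, inv_mul_cancel_left]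
  ring

theorem magnusP_of (ℓ : H → ℕ) (hℓ : IsLengthFunction ℓ) (h : I → H) (i : I) :
    MagnusP ℓ h (magnusHom ℓ h (FreeGroup.of i)) := by
  intro c
  have h1 : magnusHom ℓ h (FreeGroup.of i)
      = wreathBase (Finsupp.single (1 : H) (Finsupp.single i (max (ℓ (h i)) 1 : ℤ)))
        * wreathRight (h i) := FreeGroup.lift_apply_of
  rw [h1]
  have hleft : Multiplicative.toAdd ((wreathBase (Finsupp.single (1 : H)
        (Finsupp.single i (max (ℓ (h i)) 1 : ℤ))) * wreathRight (h i)
        : Multiplicative (H →₀ (I →₀ ℤ)) ⋊[wreathAction H (I →₀ ℤ)] H).left)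
      = Finsupp.single (1 : H) (Finsupp.single i (max (ℓ (h i)) 1 : ℤ)) := by
    show Multiplicative.toAdd (Multiplicative.ofAdd _ *
        wreathAction H (I →₀ ℤ) 1 (1 : Multiplicative (H →₀ (I →₀ ℤ)))) = _
    rw [map_one, toAdd_mul, toAdd_ofAdd, toAdd_one, add_zero]
  have hright : ((wreathBase (Finsupp.single (1 : H)
        (Finsupp.single i (max (ℓ (h i)) 1 : ℤ))) * wreathRight (h i)
        : Multiplicative (H →₀ (I →₀ ℤ)) ⋊[wreathAction H (I →₀ ℤ)] H).right)
      = h i := one_mul _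
  rw [hleft, hright, magnusD_single]
  have hl0 : ((max (ℓ (h i)) 1 : ℤ) : ℚ) ≠ 0 := by
    have hx : (1 : ℕ) ≤ max (ℓ (h i)) 1 := le_max_right _ _
    have hx2 : (0 : ℚ) < ((max (ℓ (h i)) 1 : ℤ) : ℚ) := by exact_mod_cast hx
    exact ne_of_gt hx2
  rw [magnusCoef, mul_div_assoc']
  rw [mul_comm, mul_div_assoc, div_self hl0, mul_one, one_mul]

theorem magnus_key (ℓ : H → ℕ) (hℓ : IsLengthFunction ℓ) (h : I → H) (f : FreeGroup I) :
    MagnusP ℓ h (magnusHom ℓ h f) := by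
  induction f using FreeGroup.induction_on with
  | C1 =>
    intro c
    rw [map_one]
    have hleft : Multiplicative.toAdd
        ((1 : Multiplicative (H →₀ (I →₀ ℤ)) ⋊[wreathAction H (I →₀ ℤ)] H)).left = 0 := rfl
    rw [hleft, map_zero, SemidirectProduct.one_right, inv_one, one_mul, sub_self]
  | of i => exact magnusP_of ℓ hℓ h i
  | inv_of i hi => rw [map_inv]; exact magnusP_inv ℓ h hi
  | mul x y hx hy => rw [map_mul]; exact magnusP_mul ℓ h hx hy

end MagnusAux

/-- **Metric Magnus lemma.** Let `μ : F → A ≀ H` be the generalized Magnus homomorphism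
`μ(x_i) = a_i^{l_i} h_i`, where `l_i = max(ℓ(h_i), 1)`. If `μ(f) = w·g` with `w` in the base
and `g ∈ H`, then `ℓ(g) ≤ ‖w‖`. -/
theorem generalized_magnus_length_bound {H : Type} [Group H] {I : Type}
    (ℓ : H → ℕ) (hℓ : IsLengthFunction ℓ) (h : I → H)
    (hgen : Subgroup.closure (Set.range h) = ⊤)
    (f : FreeGroup I) (w : H →₀ (I →₀ ℤ)) (g : H)
    (hf : FreeGroup.lift (fun i => wreathBase (Finsupp.single (1 : H)
            (Finsupp.single i (max (ℓ (h i)) 1 : ℤ))) * wreathRight (h i)) f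
          = wreathBase w * wreathRight g) :
    ℓ g ≤ baseNorm w := by
  have main : (ℓ g : ℚ) ≤ (baseNorm w : ℚ) := by
    have hkey := magnus_key ℓ hℓ h f 1
    obtain ⟨h1, h2, h3⟩ := hℓ
    have hmu : magnusHom ℓ h f = FreeGroup.lift (fun i => wreathBase (Finsupp.single (1 : H)
              (Finsupp.single i (max (ℓ (h i)) 1 : ℤ))) * wreathRight (h i)) f := rfl
    have hfe : magnusHom ℓ h f = (wreathBase w * wreathRight g :
        Multiplicative (H →₀ (I →₀ ℤ)) ⋊[wreathAction H (I →₀ ℤ)] H) := by rw [hmu]; exact hf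
    have hleft : Multiplicative.toAdd (magnusHom ℓ h f).left = w := by
      rw [hfe]
      show Multiplicative.toAdd (Multiplicative.ofAdd w *
          wreathAction H (I →₀ ℤ) 1 (1 : Multiplicative (H →₀ (I →₀ ℤ)))) = _
      rw [map_one, toAdd_mul, toAdd_ofAdd, toAdd_one, add_zero]
    have hright : (magnusHom ℓ h f).right = g := by rw [hfe]; exact one_mul _
    rw [hleft, hright] at hkey
    have hc1 : (ℓ (1 : H) : ℚ) = 0 := by
      rw [Nat.cast_eq_zero, h1]
    have hkey2 : magnusD (magnusCoef ℓ h 1) w = (ℓ g : ℚ) := by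
      rw [hkey, mul_one, h2, hc1, sub_zero]
    have hbound : ∀ u i, |magnusCoef ℓ h 1 u i| ≤ 1 := by
      intro u i
      rw [magnusCoef, abs_div]
      have hden : (0 : ℚ) < ((max (ℓ (h i)) 1 : ℤ) : ℚ) := by
        have hx : (1 : ℕ) ≤ max (ℓ (h i)) 1 := le_max_right _ _
        exact_mod_cast hx
      rw [abs_of_pos hden, div_le_one hden]
      have htri : |(ℓ ((h i)⁻¹ * (u * 1)) : ℚ) - (ℓ (u * 1) : ℚ)| ≤ (ℓ (h i) : ℚ) := by
        rw [abs_sub_le_iff]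
        constructor
        · have hA := h3 (h i)⁻¹ (u * 1)
          rw [h2] at hA
          have hA2 := (Nat.cast_le (α := ℚ)).2 hA
          push_cast at hA2 ⊢
          linarith
        · have hB := h3 (h i) ((h i)⁻¹ * (u * 1))
          rw [mul_inv_cancel_left] at hB
          have hB2 := (Nat.cast_le (α := ℚ)).2 hB
          push_cast at hB2 ⊢
          linarith
      refine htri.trans ?_
      have hmx : ℓ (h i) ≤ max (ℓ (h i)) 1 := le_max_left _ _
      exact_mod_cast hmx
    calc (ℓ g : ℚ) = magnusD (magnusCoef ℓ h 1) w := hkey2.symm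
      _ ≤ |magnusD (magnusCoef ℓ h 1) w| := le_abs_self _
      _ ≤ (baseNorm w : ℚ) := magnusD_bound _ hbound w
  exact_mod_cast main
end

section
/- Let H be a group generated by a family X = (h_i)_{i∈I}, F the free group with basis (x_i)_{i∈I}, ε : F → H the surjection x_i ↦ h_i with kernel N, A the free abelian group with basis (a_i)_{i∈I}, and μ : F → V = A ≀ H the Magnus homomorphism determined by μ(x_i) = a_i h_i. Suppose f ∈ F and μ(f) = w·g with g ∈ H and w in the base subgroup W of V. Then |g|_X = ‖w‖ if and only if the word length of the image of f in H ≅ F/N with respect to the images of (x_i) equals the word length of the image of f in F/[N,N] with respect to the images of (x_i). -/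
/-- The word length of `g` with respect to a generating set `X`: the least length of a word in
`X ∪ X⁻¹` representing `g`. -/
noncomputable def wordLength {G : Type*} [Group G] (X : Set G) (g : G) : ℕ :=
  sInf {n | ∃ l : List G, l.length = n ∧ (∀ x ∈ l, x ∈ X ∨ x⁻¹ ∈ X) ∧ l.prod = g}

set_option linter.unusedSectionVars false

namespace MagnusProofAux

open Finsupp

/-! ### Word length toolkit -/

section WordLength

variable {G : Type*} [Group G]

theorem wordLength_le (X : Set G) {g : G} (l : List G)
    (hX : ∀ x ∈ l, x ∈ X ∨ x⁻¹ ∈ X) (hp : l.prod = g) : wordLength X g ≤ l.length :=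
  Nat.sInf_le ⟨l, rfl, hX, hp⟩

variable {X : Set G}

theorem wordLength_set_nonempty (hgen : Subgroup.closure X = ⊤) (g : G) :
    {n | ∃ l : List G, l.length = n ∧ (∀ x ∈ l, x ∈ X ∨ x⁻¹ ∈ X) ∧ l.prod = g}.Nonempty := by
  have hg : g ∈ Subgroup.closure X := by rw [hgen]; trivial
  rw [← Subgroup.mem_toSubmonoid, Subgroup.closure_toSubmonoid] at hg
  obtain ⟨l, hl, hp⟩ := Submonoid.exists_list_of_mem_closure hg
  exact ⟨l.length, l, rfl, fun x hx => (hl x hx).imp id fun hx' => Set.mem_inv.mp hx', hp⟩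

theorem exists_wordLength_list (hgen : Subgroup.closure X = ⊤) (g : G) :
    ∃ l : List G, l.length = wordLength X g ∧ (∀ x ∈ l, x ∈ X ∨ x⁻¹ ∈ X) ∧ l.prod = g :=
  Nat.sInf_mem (wordLength_set_nonempty hgen g)

theorem wordLength_one : wordLength X (1 : G) = 0 :=
  Nat.le_zero.mp (wordLength_le X [] (by simp) rfl)

theorem eq_one_of_wordLength_eq_zero (hgen : Subgroup.closure X = ⊤) {g : G}
    (hg : wordLength X g = 0) : g = 1 := by
  obtain ⟨l, hlen, -, hp⟩ := exists_wordLength_list hgen g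
  rw [hg, List.length_eq_zero_iff] at hlen
  rw [← hp, hlen, List.prod_nil]

theorem wordLength_mul_le (hgen : Subgroup.closure X = ⊤) (a b : G) :
    wordLength X (a * b) ≤ wordLength X a + wordLength X b := by
  obtain ⟨la, ha1, ha2, ha3⟩ := exists_wordLength_list hgen a
  obtain ⟨lb, hb1, hb2, hb3⟩ := exists_wordLength_list hgen b
  have := wordLength_le X (la ++ lb) (fun x hx => by
      rcases List.mem_append.mp hx with hx | hx
      exacts [ha2 x hx, hb2 x hx])
    (by rw [List.prod_append, ha3, hb3])
  simpa [ha1, hb1] using this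

theorem wordLength_map_le {G' : Type*} [Group G'] {Y : Set G'}
    (φ : G →* G') (hXY : ∀ x ∈ X, φ x ∈ Y) (hgen : Subgroup.closure X = ⊤) (g : G) :
    wordLength Y (φ g) ≤ wordLength X g := by
  obtain ⟨l, h1, h2, h3⟩ := exists_wordLength_list hgen g
  have := wordLength_le Y (g := φ g) (l.map φ) (fun y hy => by
      obtain ⟨x, hx, rfl⟩ := List.mem_map.mp hy
      rcases h2 x hx with hx' | hx'
      · exact Or.inl (hXY x hx')
      · exact Or.inr (by rw [← map_inv]; exact hXY _ hx'))
    (by rw [← h3]; exact List.prod_hom l φ)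
  simpa [h1] using this

end WordLength

/-! ### Norm lemmas -/

section Norm

variable {H I : Type*}

/-- ℓ¹ norm on `I →₀ ℤ`. -/
def n1 (t : I →₀ ℤ) : ℕ := t.sum fun _ k => k.natAbs

@[simp] theorem n1_zero : n1 (0 : I →₀ ℤ) = 0 := Finsupp.sum_zero_index

theorem baseNorm_def (w : H →₀ (I →₀ ℤ)) : baseNorm w = w.sum fun _ t => n1 t := rfl

@[simp] theorem baseNorm_zero : baseNorm (0 : H →₀ (I →₀ ℤ)) = 0 := Finsupp.sum_zero_index

theorem n1_sum_eq {t : I →₀ ℤ} {s : Finset I} (hs : t.support ⊆ s) :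
    n1 t = ∑ i ∈ s, (t i).natAbs :=
  Finsupp.sum_of_support_subset t hs _ (fun _ _ => rfl)

theorem baseNorm_sum_eq {w : H →₀ (I →₀ ℤ)} {s : Finset H} (hs : w.support ⊆ s) :
    baseNorm w = ∑ a ∈ s, n1 (w a) :=
  Finsupp.sum_of_support_subset w hs _ (fun _ _ => n1_zero)

@[simp] theorem n1_single (i : I) (c : ℤ) : n1 (Finsupp.single i c) = c.natAbs := by
  classical
  rw [n1, Finsupp.sum_single_index]
  rfl

@[simp] theorem baseNorm_single (a : H) (t : I →₀ ℤ) :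
    baseNorm (Finsupp.single a t) = n1 t := by
  classical
  rw [baseNorm_def, Finsupp.sum_single_index]
  exact n1_zero

theorem n1_add_single (t : I →₀ ℤ) (i : I) (c : ℤ) :
    n1 (t + Finsupp.single i c) + (t i).natAbs = n1 t + (t i + c).natAbs := by
  classical
  set s : Finset I := ((t + Finsupp.single i c).support ∪ t.support) ∪ {i} with hs
  have h1 : (t + Finsupp.single i c).support ⊆ s := by
    intro j hj; rw [hs]; exact Finset.mem_union_left _ (Finset.mem_union_left _ hj)
  have h2 : t.support ⊆ s := by
    intro j hj; rw [hs]; exact Finset.mem_union_left _ (Finset.mem_union_right _ hj)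
  have hi : i ∈ s := by rw [hs]; exact Finset.mem_union_right _ (Finset.mem_singleton_self i)
  rw [n1_sum_eq h1, n1_sum_eq h2, ← Finset.sum_erase_add s _ hi,
    ← Finset.sum_erase_add s (fun j => (t j).natAbs) hi]
  have he : ∀ j ∈ s.erase i, ((t + Finsupp.single i c) j).natAbs = (t j).natAbs := by
    intro j hj
    rw [Finsupp.add_apply, Finsupp.single_apply, if_neg (Finset.ne_of_mem_erase hj).symm,
      add_zero]
  rw [Finset.sum_congr rfl he]
  have hv : ((t + Finsupp.single i c) i).natAbs = (t i + c).natAbs := by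
    rw [Finsupp.add_apply, Finsupp.single_apply, if_pos rfl]
  omega

theorem baseNorm_add_single (w : H →₀ (I →₀ ℤ)) (a : H) (u : I →₀ ℤ) :
    baseNorm (w + Finsupp.single a u) + n1 (w a) = baseNorm w + n1 (w a + u) := by
  classical
  set s : Finset H := ((w + Finsupp.single a u).support ∪ w.support) ∪ {a} with hs
  have h1 : (w + Finsupp.single a u).support ⊆ s := by
    intro j hj; rw [hs]; exact Finset.mem_union_left _ (Finset.mem_union_left _ hj)
  have h2 : w.support ⊆ s := by
    intro j hj; rw [hs]; exact Finset.mem_union_left _ (Finset.mem_union_right _ hj)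
  have ha : a ∈ s := by rw [hs]; exact Finset.mem_union_right _ (Finset.mem_singleton_self a)
  rw [baseNorm_sum_eq h1, baseNorm_sum_eq h2, ← Finset.sum_erase_add s _ ha,
    ← Finset.sum_erase_add s (fun j => n1 (w j)) ha]
  have he : ∀ j ∈ s.erase a, n1 ((w + Finsupp.single a u) j) = n1 (w j) := by
    intro j hj
    rw [Finsupp.add_apply, Finsupp.single_apply, if_neg (Finset.ne_of_mem_erase hj).symm,
      add_zero]
  rw [Finset.sum_congr rfl he]
  have hv : n1 ((w + Finsupp.single a u) a) = n1 (w a + u) := by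
    rw [Finsupp.add_apply, Finsupp.single_apply, if_pos rfl]
  omega

theorem baseNorm_update (w : H →₀ (I →₀ ℤ)) (a : H) (i : I) (c : ℤ) :
    baseNorm (w + Finsupp.single a (Finsupp.single i c)) + (w a i).natAbs
      = baseNorm w + (w a i + c).natAbs := by
  have h1 := baseNorm_add_single w a (Finsupp.single i c)
  have h2 := n1_add_single (w a) i c
  omega

theorem n1_eq_zero {t : I →₀ ℤ} (h : n1 t = 0) : t = 0 := by
  classical
  ext i
  by_contra hi
  have hmem : i ∈ t.support := Finsupp.mem_support_iff.mpr (by simpa using hi)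
  have := (Finset.sum_eq_zero_iff.mp h) i hmem
  exact hi (by simpa using Int.natAbs_eq_zero.mp this)

theorem baseNorm_eq_zero {w : H →₀ (I →₀ ℤ)} (h : baseNorm w = 0) : w = 0 := by
  classical
  ext a i
  by_contra hi
  have hwa : w a ≠ 0 := fun h0 => hi (by simp [h0])
  have hmem : a ∈ w.support := Finsupp.mem_support_iff.mpr hwa
  have := (Finset.sum_eq_zero_iff.mp h) a hmem
  have : w a = 0 := n1_eq_zero this
  simp [this] at hi

theorem n1_add_le (t t' : I →₀ ℤ) : n1 (t + t') ≤ n1 t + n1 t' := by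
  classical
  rw [n1_sum_eq (s := t.support ∪ t'.support) Finsupp.support_add,
    n1_sum_eq (s := t.support ∪ t'.support) Finset.subset_union_left,
    n1_sum_eq (s := t.support ∪ t'.support) Finset.subset_union_right,
    ← Finset.sum_add_distrib]
  refine Finset.sum_le_sum fun j _ => ?_
  rw [Finsupp.add_apply]
  exact Int.natAbs_add_le _ _

theorem baseNorm_add_le (w w' : H →₀ (I →₀ ℤ)) :
    baseNorm (w + w') ≤ baseNorm w + baseNorm w' := by
  classical
  rw [baseNorm_sum_eq (s := w.support ∪ w'.support) Finsupp.support_add,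
    baseNorm_sum_eq (s := w.support ∪ w'.support) Finset.subset_union_left,
    baseNorm_sum_eq (s := w.support ∪ w'.support) Finset.subset_union_right,
    ← Finset.sum_add_distrib]
  refine Finset.sum_le_sum fun j _ => ?_
  rw [Finsupp.add_apply]
  exact n1_add_le _ _

end Norm

/-! ### Shift lemmas -/

section Shift

variable {H : Type*} [Group H] {A : Type*} [AddCommGroup A]

@[simp] theorem wreathShift_single (p s : H) (t : A) :
    wreathShift p (Finsupp.single s t) = Finsupp.single (s * p⁻¹) t := by
  rw [wreathShift, Finsupp.domCongr_apply, Finsupp.equivMapDomain_single]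
  simp

theorem wreathShift_shift (p q : H) (x : H →₀ A) :
    wreathShift p (wreathShift q x) = wreathShift (p * q) x := by
  ext y
  simp [mul_assoc]

@[simp] theorem baseNorm_shift {I : Type*} (p : H) (w : H →₀ (I →₀ ℤ)) :
    baseNorm (wreathShift p w) = baseNorm w := by
  rw [wreathShift, Finsupp.domCongr_apply, baseNorm_def, baseNorm_def]
  exact Finsupp.sum_equivMapDomain _ _ _

end Shift

end MagnusProofAux

namespace MagnusProofAux

open Finsupp

section Psi

open scoped Classical

variable {H : Type*} [Group H] {I : Type*} (h : I → H)

/-- The boundary map: an atom at `(s, i)` maps to `δ_s - δ_{h_i⁻¹ s}`. -/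
noncomputable def psi : (H →₀ (I →₀ ℤ)) →+ (H →₀ ℤ) :=
  Finsupp.liftAddHom fun s => Finsupp.liftAddHom fun i =>
    zmultiplesHom (H →₀ ℤ) (Finsupp.single s 1 - Finsupp.single ((h i)⁻¹ * s) 1)

@[simp] theorem psi_single (s : H) (i : I) (k : ℤ) :
    psi h (Finsupp.single s (Finsupp.single i k))
      = k • (Finsupp.single s 1 - Finsupp.single ((h i)⁻¹ * s) (1 : ℤ)) := by
  rw [psi, Finsupp.liftAddHom_apply_single, Finsupp.liftAddHom_apply_single]
  rfl

theorem psi_shift (p : H) (x : H →₀ (I →₀ ℤ)) :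
    psi h (wreathShift p x) = wreathShift p (psi h x) := by
  induction x using Finsupp.induction_linear with
  | zero => simp
  | add f g hf hg => rw [map_add, map_add, map_add, map_add, hf, hg]
  | single s t =>
    induction t using Finsupp.induction_linear with
    | zero => simp
    | add f g hf hg =>
      rw [Finsupp.single_add, map_add, map_add, map_add, map_add, hf, hg]
    | single i k =>
      rw [wreathShift_single, psi_single, psi_single, map_zsmul, map_sub,
        wreathShift_single, wreathShift_single, mul_assoc]

theorem psi_apply_eq_sum (w : H →₀ (I →₀ ℤ)) (a : H) :
    psi h w a = w.sum fun s t => t.sum fun i k =>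
      k * ((if s = a then 1 else 0) - if (h i)⁻¹ * s = a then 1 else 0) := by
  rw [psi, Finsupp.liftAddHom_apply, Finsupp.sum_apply]
  refine Finsupp.sum_congr fun s _ => ?_
  rw [Finsupp.liftAddHom_apply, Finsupp.sum_apply]
  refine Finsupp.sum_congr fun i _ => ?_
  rw [zmultiplesHom_apply, Finsupp.smul_apply, Finsupp.sub_apply, smul_eq_mul]
  rw [Finsupp.single_apply, Finsupp.single_apply]

theorem exists_slot {w : H →₀ (I →₀ ℤ)} {a : H} (hpos : 0 < psi h w a) :
    ∃ i, 0 < w a i ∨ w (h i * a) i < 0 := by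
  by_contra hc
  push_neg at hc
  have key : psi h w a ≤ 0 := by
    rw [psi_apply_eq_sum, Finsupp.sum]
    refine Finset.sum_nonpos fun s _ => ?_
    rw [Finsupp.sum]
    refine Finset.sum_nonpos fun i _ => ?_
    obtain ⟨h1, h2⟩ := hc i
    rcases eq_or_ne s a with rfl | hsa
    · rcases eq_or_ne ((h i)⁻¹ * s) s with he | he
      · simp [he]
      · simpa [he] using h1
    · rcases eq_or_ne ((h i)⁻¹ * s) a with he | he
      · have hs_eq : s = h i * a := by rw [← he, mul_inv_cancel_left]
        rw [if_neg hsa, if_pos he, hs_eq]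
        nlinarith [h2]
      · simp [hsa, he]
  omega

end Psi

section Mu

variable {H : Type*} [Group H] {I : Type*} (h : I → H)

/-- The Magnus homomorphism. -/
noncomputable def mu : FreeGroup I →* WreathProd (I →₀ ℤ) H :=
  FreeGroup.lift fun i =>
    wreathBase (Finsupp.single (1 : H) (Finsupp.single i (1 : ℤ))) * wreathRight (h i)

/-- The base component of the Magnus image. -/
noncomputable def cmap (u : FreeGroup I) : H →₀ (I →₀ ℤ) :=
  Multiplicative.toAdd (SemidirectProduct.left (mu h u))

theorem mu_of (i : I) : mu h (FreeGroup.of i)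
    = wreathBase (Finsupp.single (1 : H) (Finsupp.single i (1 : ℤ))) * wreathRight (h i) :=
  FreeGroup.lift_apply_of

theorem pure_eq_of (i : I) : (pure i : FreeGroup I) = FreeGroup.of i := rfl

theorem rightHom_mu (u : FreeGroup I) :
    SemidirectProduct.rightHom (mu h u) = FreeGroup.lift h u := by
  induction u using FreeGroup.induction_on with
  | C1 => erw [map_one]
  | of i =>
    erw [mu_of, map_mul, wreathBase, wreathRight,
      SemidirectProduct.rightHom_inl, SemidirectProduct.rightHom_inr, one_mul,
      FreeGroup.lift_apply_of]
  | inv_of i hi => erw [map_inv, map_inv, hi, ← map_inv]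
  | mul u v hu hv => erw [map_mul, map_mul, map_mul, hu, hv]

theorem cmap_one : cmap h 1 = 0 := by
  rw [cmap, map_one]
  rfl

theorem cmap_of (i : I) : cmap h (FreeGroup.of i) = Finsupp.single 1 (Finsupp.single i 1) := by
  rw [cmap, mu_of]
  show Multiplicative.toAdd (SemidirectProduct.left
    (SemidirectProduct.inl (Multiplicative.ofAdd (Finsupp.single (1:H) (Finsupp.single i (1:ℤ))))
      * SemidirectProduct.inr (h i))) = _
  erw [SemidirectProduct.mul_left, SemidirectProduct.left_inl, SemidirectProduct.right_inl,
    SemidirectProduct.left_inr, map_one]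
  simp

theorem cmap_mul (u v : FreeGroup I) :
    cmap h (u * v) = cmap h u + wreathShift (FreeGroup.lift h u) (cmap h v) := by
  rw [cmap, map_mul, ← rightHom_mu]
  rfl

theorem cmap_inv_of (i : I) :
    cmap h (FreeGroup.of i)⁻¹ = -(Finsupp.single (h i) (Finsupp.single i (1:ℤ))) := by
  have h0 := cmap_mul h (FreeGroup.of i)⁻¹ (FreeGroup.of i)
  rw [inv_mul_cancel, cmap_one, cmap_of, map_inv, FreeGroup.lift_apply_of,
    wreathShift_single, one_mul, inv_inv] at h0
  exact (neg_eq_of_add_eq_zero_left h0.symm).symm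

theorem mu_decomp (u : FreeGroup I) :
    mu h u = wreathBase (cmap h u) * wreathRight (FreeGroup.lift h u) := by
  rw [wreathBase, wreathRight, cmap, ← rightHom_mu]
  rw [ofAdd_toAdd, SemidirectProduct.rightHom_eq_right]
  exact (SemidirectProduct.inl_left_mul_inr_right (mu h u)).symm

theorem psi_cmap (u : FreeGroup I) :
    psi h (cmap h u) = Finsupp.single 1 1 - Finsupp.single (FreeGroup.lift h u)⁻¹ 1 := by
  induction u using FreeGroup.induction_on with
  | C1 => simp [cmap_one]
  | of i =>
    rw [cmap_of, psi_single, FreeGroup.lift_apply_of, one_zsmul, mul_one]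
  | inv_of i _ =>
    rw [cmap_inv_of, map_neg, psi_single, map_inv, FreeGroup.lift_apply_of, one_zsmul,
      inv_mul_cancel, inv_inv, neg_sub]
  | mul u v hu hv =>
    rw [cmap_mul, map_add, hu, psi_shift, hv, map_sub, wreathShift_single,
      wreathShift_single, map_mul, one_mul, mul_inv_rev]
    abel

end Mu

end MagnusProofAux

namespace MagnusProofAux

open Finsupp

section LemmaP

variable {H : Type*} [Group H] {I : Type*} (h : I → H)

theorem wordLength_single_le (i : I) : wordLength (Set.range h) (h i) ≤ 1 := by
  have := wordLength_le (Set.range h) (g := h i) [h i]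
    (by intro x hx; rw [List.mem_singleton] at hx; subst hx; exact Or.inl ⟨i, rfl⟩)
    (List.prod_singleton)
  simpa using this

theorem wordLength_single_inv_le (i : I) : wordLength (Set.range h) (h i)⁻¹ ≤ 1 := by
  have := wordLength_le (Set.range h) (g := (h i)⁻¹) [(h i)⁻¹]
    (by intro x hx; rw [List.mem_singleton] at hx; subst hx
        exact Or.inr (by rw [inv_inv]; exact ⟨i, rfl⟩))
    (List.prod_singleton)
  simpa using this

/-- Flow lower bound: if `ψ w = δ_a - δ_b` then `d(a, b) ≤ ‖w‖`. -/
theorem wl_le_baseNorm (hgen : Subgroup.closure (Set.range h) = ⊤) :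
    ∀ (n : ℕ) (w : H →₀ (I →₀ ℤ)) (a b : H), baseNorm w = n →
      psi h w = Finsupp.single a 1 - Finsupp.single b 1 →
      wordLength (Set.range h) (a * b⁻¹) ≤ n := by
  intro n
  induction n using Nat.strong_induction_on with
  | _ n ih =>
    intro w a b hn hpsi
    classical
    rcases eq_or_ne a b with rfl | hab
    · rw [mul_inv_cancel]
      rw [wordLength_one]
      exact Nat.zero_le n
    · have ha : psi h w a = 1 := by
        rw [hpsi, Finsupp.sub_apply, Finsupp.single_apply, Finsupp.single_apply,
          if_pos rfl, if_neg (Ne.symm hab)]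
        norm_num
      obtain ⟨i, hi⟩ := exists_slot h (w := w) (a := a) (by rw [ha]; norm_num)
      rcases hi with hi | hi
      · -- remove a positive unit at (a, i)
        set w' := w + Finsupp.single a (Finsupp.single i (-1)) with hw'
        have hupd := baseNorm_update w a i (-1)
        rw [← hw'] at hupd
        have hn' : baseNorm w' + 1 = n := by rw [← hn]; omega
        have hpsi' : psi h w' = Finsupp.single ((h i)⁻¹ * a) 1 - Finsupp.single b 1 := by
          rw [hw', map_add, hpsi, psi_single, neg_one_zsmul, neg_sub]
          abel
        have hih := ih (baseNorm w') (by omega) w' ((h i)⁻¹ * a) b rfl hpsi'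
        have hsplit : a * b⁻¹ = h i * ((h i)⁻¹ * a * b⁻¹) := by group
        calc wordLength (Set.range h) (a * b⁻¹)
            = wordLength (Set.range h) (h i * ((h i)⁻¹ * a * b⁻¹)) := by rw [← hsplit]
          _ ≤ wordLength (Set.range h) (h i)
              + wordLength (Set.range h) ((h i)⁻¹ * a * b⁻¹) := wordLength_mul_le hgen _ _
          _ ≤ 1 + baseNorm w' := by
              have h1 := wordLength_single_le h i
              have h2 : wordLength (Set.range h) ((h i)⁻¹ * a * b⁻¹) ≤ baseNorm w' := hih
              omega
          _ = n := by omega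
      · -- remove a negative unit at (h i * a, i)
        set w' := w + Finsupp.single (h i * a) (Finsupp.single i 1) with hw'
        have hupd := baseNorm_update w (h i * a) i 1
        rw [← hw'] at hupd
        have hn' : baseNorm w' + 1 = n := by rw [← hn]; omega
        have hpsi' : psi h w' = Finsupp.single (h i * a) 1 - Finsupp.single b 1 := by
          rw [hw', map_add, hpsi, psi_single, one_zsmul, inv_mul_cancel_left]
          abel
        have hih := ih (baseNorm w') (by omega) w' (h i * a) b rfl hpsi'
        have hsplit : a * b⁻¹ = (h i)⁻¹ * (h i * a * b⁻¹) := by group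
        calc wordLength (Set.range h) (a * b⁻¹)
            = wordLength (Set.range h) ((h i)⁻¹ * (h i * a * b⁻¹)) := by rw [← hsplit]
          _ ≤ wordLength (Set.range h) (h i)⁻¹
              + wordLength (Set.range h) (h i * a * b⁻¹) := wordLength_mul_le hgen _ _
          _ ≤ 1 + baseNorm w' := by
              have h1 := wordLength_single_inv_le h i
              have h2 : wordLength (Set.range h) (h i * a * b⁻¹) ≤ baseNorm w' := hih
              omega
          _ = n := by omega

theorem wordLength_le_baseNorm_cmap (hgen : Subgroup.closure (Set.range h) = ⊤)
    (u : FreeGroup I) :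
    wordLength (Set.range h) (FreeGroup.lift h u) ≤ baseNorm (cmap h u) := by
  have := wl_le_baseNorm h hgen (baseNorm (cmap h u)) (cmap h u) 1
    (FreeGroup.lift h u)⁻¹ rfl (psi_cmap h u)
  simpa using this

end LemmaP

section Letters

variable {H : Type*} [Group H] {I : Type*} (h : I → H)

theorem baseNorm_cmap_letter {x : FreeGroup I}
    (hx : ∃ i, x = FreeGroup.of i ∨ x = (FreeGroup.of i)⁻¹) :
    baseNorm (cmap h x) ≤ 1 := by
  obtain ⟨i, rfl | rfl⟩ := hx
  · rw [cmap_of, baseNorm_single, n1_single]; simp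
  · rw [cmap_inv_of, ← Finsupp.single_neg, baseNorm_single, ← Finsupp.single_neg, n1_single]
    simp

theorem baseNorm_cmap_prod_le (l : List (FreeGroup I))
    (hl : ∀ x ∈ l, ∃ i, x = FreeGroup.of i ∨ x = (FreeGroup.of i)⁻¹) :
    baseNorm (cmap h l.prod) ≤ l.length := by
  induction l with
  | nil => rw [List.prod_nil, cmap_one, baseNorm_zero]; exact Nat.zero_le _
  | cons x l ih =>
    rw [List.prod_cons, cmap_mul]
    refine le_trans (baseNorm_add_le _ _) ?_
    have h1 : baseNorm (cmap h x) ≤ 1 := baseNorm_cmap_letter h (hl x (List.mem_cons_self))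
    have h2 := ih (fun y hy => hl y (List.mem_cons_of_mem _ hy))
    rw [baseNorm_shift, List.length_cons]
    omega

theorem exists_letter_lift {Q : Type*} [Group Q] (π : FreeGroup I →* Q) :
    ∀ (l' : List Q),
      (∀ x ∈ l', x ∈ Set.range (fun i => π (FreeGroup.of i))
        ∨ x⁻¹ ∈ Set.range (fun i => π (FreeGroup.of i))) →
      ∃ l : List (FreeGroup I), l.length = l'.length
        ∧ (∀ x ∈ l, ∃ i, x = FreeGroup.of i ∨ x = (FreeGroup.of i)⁻¹)
        ∧ l.map π = l' := by
  intro l'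
  induction l' with
  | nil => exact fun _ => ⟨[], rfl, by simp, rfl⟩
  | cons x l ih =>
    intro hx
    obtain ⟨l0, h1, h2, h3⟩ := ih (fun y hy => hx y (List.mem_cons_of_mem _ hy))
    rcases hx x (List.mem_cons_self) with ⟨i, hi⟩ | ⟨i, hi⟩
    · refine ⟨FreeGroup.of i :: l0, by simp [h1], ?_, ?_⟩
      · intro y hy
        rcases List.mem_cons.mp hy with rfl | hy
        · exact ⟨i, Or.inl rfl⟩
        · exact h2 y hy
      · rw [List.map_cons, h3]; simp only at hi; rw [hi]
    · refine ⟨(FreeGroup.of i)⁻¹ :: l0, by simp [h1], ?_, ?_⟩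
      · intro y hy
        rcases List.mem_cons.mp hy with rfl | hy
        · exact ⟨i, Or.inr rfl⟩
        · exact h2 y hy
      · rw [List.map_cons, h3, map_inv]; simp only at hi; rw [hi, inv_inv]

end Letters

section Construction

variable {H : Type*} [Group H] {I : Type*} (h : I → H)

theorem atom_neg (a : H) (i : I) :
    Finsupp.single a (Finsupp.single i (-1 : ℤ)) = -Finsupp.single a (Finsupp.single i (1 : ℤ)) := by
  have e1 : Finsupp.single i (-1 : ℤ) = -Finsupp.single i (1 : ℤ) := Finsupp.single_neg _ _
  rw [e1, Finsupp.single_neg]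

theorem exists_geodesic_word (hgen : Subgroup.closure (Set.range h) = ⊤) :
    ∀ (n : ℕ) (f : FreeGroup I),
      baseNorm (cmap h f) = n → wordLength (Set.range h) (FreeGroup.lift h f) = n →
      ∃ l : List (FreeGroup I), l.length = n
        ∧ (∀ x ∈ l, ∃ i, x = FreeGroup.of i ∨ x = (FreeGroup.of i)⁻¹)
        ∧ mu h l.prod = mu h f := by
  intro n
  induction n with
  | zero =>
    intro f hc hwl
    refine ⟨[], rfl, by simp, ?_⟩
    have h1 : FreeGroup.lift h f = 1 := eq_one_of_wordLength_eq_zero hgen hwl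
    have h2 : cmap h f = 0 := baseNorm_eq_zero hc
    have h3 : mu h f = 1 := by
      rw [mu_decomp, h1, h2, wreathBase, wreathRight]
      simp
      exact mul_one _
    rw [List.prod_nil, map_one, h3]
  | succ n ih =>
    intro f hc hwl
    classical
    have hg1 : FreeGroup.lift h f ≠ 1 := by
      intro hone
      rw [hone, wordLength_one] at hwl
      exact Nat.succ_ne_zero n hwl.symm
    have ha : psi h (cmap h f) 1 = 1 := by
      rw [psi_cmap, Finsupp.sub_apply, Finsupp.single_apply, Finsupp.single_apply,
        if_pos rfl, if_neg (fun hx => hg1 (by rwa [inv_eq_one] at hx))]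
      norm_num
    obtain ⟨i, hi⟩ := exists_slot h (w := cmap h f) (a := 1) (by rw [ha]; norm_num)
    rcases hi with hi | hi
    · -- positive unit at (1, i); first letter is `of i`
      set f' := (FreeGroup.of i)⁻¹ * f with hf'
      have hcf' : cmap h f'
          = wreathShift (h i)⁻¹ (cmap h f + Finsupp.single 1 (Finsupp.single i (-1))) := by
        rw [hf', cmap_mul, cmap_inv_of, map_inv, FreeGroup.lift_apply_of, map_add,
          wreathShift_single, one_mul, inv_inv, atom_neg]
        abel
      have hbc' : baseNorm (cmap h f') = n := by
        rw [hcf', baseNorm_shift]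
        have h3 := baseNorm_update (cmap h f) 1 i (-1)
        omega
      have heps' : FreeGroup.lift h f' = (h i)⁻¹ * FreeGroup.lift h f := by
        rw [hf', map_mul, map_inv, FreeGroup.lift_apply_of]
      have hup : wordLength (Set.range h) (FreeGroup.lift h f') ≤ n := by
        have := wordLength_le_baseNorm_cmap h hgen f'
        omega
      have hlow : n ≤ wordLength (Set.range h) (FreeGroup.lift h f') := by
        have hsplit : FreeGroup.lift h f = h i * FreeGroup.lift h f' := by
          rw [heps', mul_inv_cancel_left]
        have h4 := wordLength_mul_le hgen (h i) (FreeGroup.lift h f')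
        rw [← hsplit, hwl] at h4
        have h5 := wordLength_single_le h i
        omega
      obtain ⟨l, hl1, hl2, hl3⟩ := ih f' hbc' (by omega)
      refine ⟨FreeGroup.of i :: l, by simp [hl1], ?_, ?_⟩
      · intro y hy
        rcases List.mem_cons.mp hy with rfl | hy
        · exact ⟨i, Or.inl rfl⟩
        · exact hl2 y hy
      · rw [List.prod_cons, map_mul, hl3, hf', ← map_mul, mul_inv_cancel_left]
    · -- negative unit at (h i, i); first letter is `(of i)⁻¹`
      rw [mul_one] at hi
      set f' := FreeGroup.of i * f with hf'
      have hcf' : cmap h f'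
          = wreathShift (h i) (cmap h f + Finsupp.single (h i) (Finsupp.single i 1)) := by
        rw [hf', cmap_mul, cmap_of, FreeGroup.lift_apply_of, map_add, wreathShift_single,
          mul_inv_cancel]
        abel
      have hbc' : baseNorm (cmap h f') = n := by
        rw [hcf', baseNorm_shift]
        have h3 := baseNorm_update (cmap h f) (h i) i 1
        omega
      have heps' : FreeGroup.lift h f' = h i * FreeGroup.lift h f := by
        rw [hf', map_mul, FreeGroup.lift_apply_of]
      have hup : wordLength (Set.range h) (FreeGroup.lift h f') ≤ n := by
        have := wordLength_le_baseNorm_cmap h hgen f'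
        omega
      have hlow : n ≤ wordLength (Set.range h) (FreeGroup.lift h f') := by
        have hsplit : FreeGroup.lift h f = (h i)⁻¹ * FreeGroup.lift h f' := by
          rw [heps', inv_mul_cancel_left]
        have h4 := wordLength_mul_le hgen (h i)⁻¹ (FreeGroup.lift h f')
        rw [← hsplit, hwl] at h4
        have h5 := wordLength_single_inv_le h i
        omega
      obtain ⟨l, hl1, hl2, hl3⟩ := ih f' hbc' (by omega)
      refine ⟨(FreeGroup.of i)⁻¹ :: l, by simp [hl1], ?_, ?_⟩
      · intro y hy
        rcases List.mem_cons.mp hy with rfl | hy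
        · exact ⟨i, Or.inr rfl⟩
        · exact hl2 y hy
      · rw [List.prod_cons, map_mul, hl3, hf', ← map_mul, inv_mul_cancel_left]

end Construction

end MagnusProofAux

namespace MagnusProofAux

open Finsupp

section Magnus

variable {H : Type*} [Group H] {I : Type*} (h : I → H)
variable (hsur : Function.Surjective (FreeGroup.lift h : FreeGroup I →* H))

/-- A section of `ε = lift h`. -/
noncomputable def sec (p : H) : FreeGroup I := Function.surjInv hsur p

theorem lift_sec (p : H) : FreeGroup.lift h (sec h hsur p) = p :=
  Function.surjInv_eq hsur p

theorem mem_ker_conj (p : H) (u : FreeGroup I) :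
    sec h hsur p * u * (sec h hsur (p * FreeGroup.lift h u))⁻¹ ∈ (FreeGroup.lift h).ker := by
  rw [MonoidHom.mem_ker, map_mul, map_mul, map_inv, lift_sec, lift_sec]
  group

/-- The class of the conjugated generator in the abelianization of `N`. -/
noncomputable def gam (s : H) (i : I) :
    Additive (Abelianization ((FreeGroup.lift h).ker)) :=
  Additive.ofMul (Abelianization.of
    (⟨sec h hsur s⁻¹ * FreeGroup.of i * (sec h hsur (s⁻¹ * h i))⁻¹, by
      have := mem_ker_conj h hsur s⁻¹ (FreeGroup.of i)
      rwa [FreeGroup.lift_apply_of] at this⟩ : ((FreeGroup.lift h).ker)))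

/-- The linear functional computing the class mod `[N,N]` from the Magnus base component. -/
noncomputable def Lam : (H →₀ (I →₀ ℤ)) →+ Additive (Abelianization ((FreeGroup.lift h).ker)) :=
  Finsupp.liftAddHom fun s => Finsupp.liftAddHom fun i => zmultiplesHom _ (gam h hsur s i)

@[simp] theorem Lam_single (s : H) (i : I) (k : ℤ) :
    Lam h hsur (Finsupp.single s (Finsupp.single i k)) = k • gam h hsur s i := by
  rw [Lam, Finsupp.liftAddHom_apply_single, Finsupp.liftAddHom_apply_single]
  rfl

theorem ofMul_of_congr {x y : ((FreeGroup.lift h).ker)} (hxy : (x : FreeGroup I) = y) :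
    Additive.ofMul (Abelianization.of x) = Additive.ofMul (Abelianization.of y) := by
  rw [Subtype.ext hxy]

theorem kappa (u : FreeGroup I) : ∀ (p q : H), q = p * FreeGroup.lift h u →
    ∀ (hm : sec h hsur p * u * (sec h hsur q)⁻¹ ∈ (FreeGroup.lift h).ker),
    Additive.ofMul (Abelianization.of
        (⟨sec h hsur p * u * (sec h hsur q)⁻¹, hm⟩ : ((FreeGroup.lift h).ker)))
      = Lam h hsur (wreathShift p (cmap h u)) := by
  induction u using FreeGroup.induction_on with
  | C1 =>
    intro p q hq hm
    have h1 : sec h hsur p * 1 * (sec h hsur q)⁻¹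
        = ((1 : ((FreeGroup.lift h).ker)) : FreeGroup I) := by
      rw [hq, map_one, mul_one, mul_one, mul_inv_cancel]; rfl
    rw [ofMul_of_congr h (x := ⟨_, hm⟩) (y := 1) h1, cmap_one, map_zero, map_zero, map_one]
    rfl
  | of i =>
    intro p q hq hm
    rw [FreeGroup.lift_apply_of] at hq
    subst hq
    show Additive.ofMul (Abelianization.of
        (⟨sec h hsur p * FreeGroup.of i * (sec h hsur (p * h i))⁻¹, hm⟩ :
          ((FreeGroup.lift h).ker)))
      = Lam h hsur (wreathShift p (cmap h (FreeGroup.of i)))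
    rw [cmap_of, wreathShift_single, one_mul, Lam_single, one_zsmul, gam]
    refine ofMul_of_congr h ?_
    show sec h hsur p * FreeGroup.of i * (sec h hsur (p * h i))⁻¹
        = sec h hsur p⁻¹⁻¹ * FreeGroup.of i * (sec h hsur (p⁻¹⁻¹ * h i))⁻¹
    rw [inv_inv]
  | inv_of i _ =>
    intro p q hq hm
    rw [map_inv, FreeGroup.lift_apply_of] at hq
    subst hq
    show Additive.ofMul (Abelianization.of
        (⟨sec h hsur p * (FreeGroup.of i)⁻¹ * (sec h hsur (p * (h i)⁻¹))⁻¹, hm⟩ :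
          ((FreeGroup.lift h).ker)))
      = Lam h hsur (wreathShift p (cmap h (FreeGroup.of i)⁻¹))
    have hmy : sec h hsur (p * (h i)⁻¹) * FreeGroup.of i
        * (sec h hsur (p * (h i)⁻¹ * h i))⁻¹ ∈ (FreeGroup.lift h).ker := by
      have := mem_ker_conj h hsur (p * (h i)⁻¹) (FreeGroup.of i)
      rwa [FreeGroup.lift_apply_of] at this
    set y : ((FreeGroup.lift h).ker) :=
      ⟨sec h hsur (p * (h i)⁻¹) * FreeGroup.of i * (sec h hsur (p * (h i)⁻¹ * h i))⁻¹, hmy⟩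
      with hy
    have hx : (⟨sec h hsur p * (FreeGroup.of i)⁻¹ * (sec h hsur (p * (h i)⁻¹))⁻¹,
        show _ ∈ (FreeGroup.lift h).ker from hm⟩ :
        ((FreeGroup.lift h).ker)) = y⁻¹ := by
      apply Subtype.ext
      rw [hy]
      show sec h hsur p * (FreeGroup.of i)⁻¹ * (sec h hsur (p * (h i)⁻¹))⁻¹
        = (sec h hsur (p * (h i)⁻¹) * FreeGroup.of i * (sec h hsur (p * (h i)⁻¹ * h i))⁻¹)⁻¹
      rw [inv_mul_cancel_right]
      group
    rw [hx, map_inv]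
    have hyval : Additive.ofMul (Abelianization.of y) = gam h hsur (h i * p⁻¹) i := by
      rw [gam]
      refine ofMul_of_congr h ?_
      have e1 : (h i * p⁻¹)⁻¹ = p * (h i)⁻¹ := by rw [mul_inv_rev, inv_inv]
      show sec h hsur (p * (h i)⁻¹) * FreeGroup.of i * (sec h hsur (p * (h i)⁻¹ * h i))⁻¹
          = sec h hsur (h i * p⁻¹)⁻¹ * FreeGroup.of i * (sec h hsur ((h i * p⁻¹)⁻¹ * h i))⁻¹
      rw [e1]
    have : Additive.ofMul ((Abelianization.of y)⁻¹) = -Additive.ofMul (Abelianization.of y) := rfl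
    rw [this, hyval, cmap_inv_of, map_neg, map_neg, wreathShift_single, Lam_single, one_zsmul]
  | mul u v hu hv =>
    intro p q hq hm
    rw [map_mul] at hq
    subst hq
    have hmy := mem_ker_conj h hsur p u
    have hmz' := mem_ker_conj h hsur (p * FreeGroup.lift h u) v
    set y : ((FreeGroup.lift h).ker) :=
      ⟨sec h hsur p * u * (sec h hsur (p * FreeGroup.lift h u))⁻¹, hmy⟩ with hy
    set z : ((FreeGroup.lift h).ker) :=
      ⟨sec h hsur (p * FreeGroup.lift h u) * v
        * (sec h hsur (p * FreeGroup.lift h u * FreeGroup.lift h v))⁻¹, hmz'⟩ with hz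
    have hx : (⟨sec h hsur p * (u * v)
        * (sec h hsur (p * (FreeGroup.lift h u * FreeGroup.lift h v)))⁻¹, hm⟩ :
        ((FreeGroup.lift h).ker)) = y * z := by
      apply Subtype.ext
      rw [hy, hz]
      show sec h hsur p * (u * v) * (sec h hsur (p * (FreeGroup.lift h u * FreeGroup.lift h v)))⁻¹
        = sec h hsur p * u * (sec h hsur (p * FreeGroup.lift h u))⁻¹
          * (sec h hsur (p * FreeGroup.lift h u) * v
            * (sec h hsur (p * FreeGroup.lift h u * FreeGroup.lift h v))⁻¹)
      rw [← mul_assoc p]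
      group
    rw [hx, map_mul]
    have e1 : Additive.ofMul (Abelianization.of y * Abelianization.of z)
        = Additive.ofMul (Abelianization.of y) + Additive.ofMul (Abelianization.of z) := rfl
    rw [e1, hu p (p * FreeGroup.lift h u) rfl hmy,
      hv (p * FreeGroup.lift h u) (p * FreeGroup.lift h u * FreeGroup.lift h v) rfl hmz',
      cmap_mul, map_add, map_add, wreathShift_shift]

include hsur in
/-- Magnus injectivity: if `μ u = 1` then `u ∈ [N, N]`. -/
theorem mem_commutator_of_mu_trivial {u : FreeGroup I}
    (h1 : FreeGroup.lift h u = 1) (h0 : cmap h u = 0) :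
    u ∈ ⁅(FreeGroup.lift h).ker, (FreeGroup.lift h).ker⁆ := by
  have hm := mem_ker_conj h hsur 1 u
  have hk := kappa h hsur u 1 (1 * FreeGroup.lift h u) rfl hm
  rw [h0, map_zero, map_zero] at hk
  have hk1 : Abelianization.of
      (⟨sec h hsur 1 * u * (sec h hsur (1 * FreeGroup.lift h u))⁻¹, hm⟩ :
        ((FreeGroup.lift h).ker)) = 1 := hk
  have hxc : (⟨sec h hsur 1 * u * (sec h hsur (1 * FreeGroup.lift h u))⁻¹, hm⟩ :
      ((FreeGroup.lift h).ker)) ∈ commutator ((FreeGroup.lift h).ker) :=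
    (QuotientGroup.eq_one_iff _).mp hk1
  have hmap : sec h hsur 1 * u * (sec h hsur (1 * FreeGroup.lift h u))⁻¹
      ∈ ⁅(FreeGroup.lift h).ker, (FreeGroup.lift h).ker⁆ := by
    have hcomm : Subgroup.map ((FreeGroup.lift h).ker).subtype
        (commutator ((FreeGroup.lift h).ker))
        = ⁅(FreeGroup.lift h).ker, (FreeGroup.lift h).ker⁆ := by
      rw [commutator_def, Subgroup.map_commutator, ← MonoidHom.range_eq_map, Subgroup.range_subtype]
    rw [← hcomm]
    exact ⟨_, hxc, rfl⟩
  have hnormal : (⁅(FreeGroup.lift h).ker, (FreeGroup.lift h).ker⁆ :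
      Subgroup (FreeGroup I)).Normal := Subgroup.commutator_normal _ _
  have hconj := hnormal.conj_mem _ hmap (sec h hsur 1)⁻¹
  rw [h1, mul_one] at hconj
  have : (sec h hsur 1)⁻¹ * (sec h hsur 1 * u * (sec h hsur 1)⁻¹) * (sec h hsur 1)⁻¹⁻¹ = u := by
    group
  rwa [this] at hconj

end Magnus

end MagnusProofAux

namespace MagnusProofAux

open Finsupp

section Glue

variable {H : Type*} [Group H] {A : Type*} [AddCommGroup A] {I : Type*}

theorem left_base_mul_right (w : H →₀ A) (g : H) :
    SemidirectProduct.left (wreathBase w * wreathRight g : WreathProd A H)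
      = Multiplicative.ofAdd w := by
  erw [wreathBase, wreathRight, SemidirectProduct.mul_left, SemidirectProduct.left_inl,
    SemidirectProduct.right_inl, SemidirectProduct.left_inr, map_one]
  simp

theorem rightHom_base_mul_right (w : H →₀ A) (g : H) :
    SemidirectProduct.rightHom (wreathBase w * wreathRight g : WreathProd A H) = g := by
  erw [wreathBase, wreathRight, map_mul, SemidirectProduct.rightHom_inl,
    SemidirectProduct.rightHom_inr, one_mul]

theorem wreathBase_mul (x y : H →₀ A) :
    (wreathBase x : WreathProd A H) * wreathBase y = wreathBase (x + y) := by
  refine SemidirectProduct.ext ?_ ?_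
  · simp only [wreathBase]
    erw [SemidirectProduct.mul_left, SemidirectProduct.left_inl, SemidirectProduct.left_inl,
      SemidirectProduct.left_inl, SemidirectProduct.right_inl, map_one]
    simp
  · simp only [wreathBase]
    erw [SemidirectProduct.mul_right, SemidirectProduct.right_inl, mul_one]

theorem wreathBase_commute (x y : H →₀ A) :
    (wreathBase x : WreathProd A H) * wreathBase y = wreathBase y * wreathBase x := by
  rw [wreathBase_mul, wreathBase_mul, add_comm]

theorem wreathRight_one : (wreathRight (1 : H) : WreathProd A H) = 1 := by
  erw [wreathRight, map_one]
  rfl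

end Glue

end MagnusProofAux

open MagnusProofAux in
theorem magnus_word_length_eq_iff' {H : Type} [Group H] {I : Type}
    (h : I → H) (hgen : Subgroup.closure (Set.range h) = ⊤)
    (f : FreeGroup I) (w : H →₀ (I →₀ ℤ)) (g : H)
    (hf : FreeGroup.lift (fun i => wreathBase (Finsupp.single (1 : H)
            (Finsupp.single i (1 : ℤ))) * wreathRight (h i)) f
          = wreathBase w * wreathRight g) :
    wordLength (Set.range h) g = baseNorm w ↔
      wordLength (Set.range h) ((FreeGroup.lift h) f) =
        wordLength
          (Set.range fun i => ((FreeGroup.of i : FreeGroup I) :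
            FreeGroup I ⧸ ⁅(FreeGroup.lift h).ker, (FreeGroup.lift h).ker⁆))
          ((f : FreeGroup I) : FreeGroup I ⧸ ⁅(FreeGroup.lift h).ker, (FreeGroup.lift h).ker⁆) := by
  classical
  have hsur : Function.Surjective ⇑(FreeGroup.lift h) := by
    rw [← MonoidHom.range_eq_top, FreeGroup.range_lift_eq_closure, hgen]
  have hf' : mu h f = wreathBase w * wreathRight g := hf
  have hw : cmap h f = w := by
    rw [cmap, hf', left_base_mul_right]
    rfl
  have hg : FreeGroup.lift h f = g := by
    rw [← rightHom_mu, hf', rightHom_base_mul_right]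
  -- generation of the quotient
  have hgenQ : Subgroup.closure (Set.range fun i => ((FreeGroup.of i : FreeGroup I) :
      FreeGroup I ⧸ ⁅(FreeGroup.lift h).ker, (FreeGroup.lift h).ker⁆)) = ⊤ := by
    have h1 : Subgroup.closure (Set.range (FreeGroup.of : I → FreeGroup I)) = ⊤ :=
      FreeGroup.closure_range_of I
    have h2 := Subgroup.map_top_of_surjective
      (QuotientGroup.mk' ⁅(FreeGroup.lift h).ker, (FreeGroup.lift h).ker⁆)
      (QuotientGroup.mk'_surjective _)
    rw [← h2, ← h1, MonoidHom.map_closure]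
    congr 1
    rw [← Set.range_comp]
    rfl
  have hNN_le : ⁅(FreeGroup.lift h).ker, (FreeGroup.lift h).ker⁆ ≤ (FreeGroup.lift h).ker :=
    Subgroup.commutator_le.mpr fun g1 h1 g2 h2 => by
      rw [commutatorElement_def]
      exact mul_mem (mul_mem (mul_mem h1 h2) (inv_mem h1)) (inv_mem h2)
  have hker_mu : ⁅(FreeGroup.lift h).ker, (FreeGroup.lift h).ker⁆ ≤ (mu h).ker := by
    rw [Subgroup.commutator_le]
    intro a ha b hb
    rw [MonoidHom.mem_ker, map_commutatorElement, commutatorElement_eq_one_iff_commute]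
    rw [MonoidHom.mem_ker] at ha hb
    have hda := mu_decomp h a
    have hdb := mu_decomp h b
    rw [ha] at hda
    rw [hb] at hdb
    rw [hda, hdb, wreathRight_one, mul_one, mul_one]
    exact wreathBase_commute _ _
  -- I1 : |g| ≤ ‖w‖
  have I1 : wordLength (Set.range h) g ≤ baseNorm w := by
    have := wordLength_le_baseNorm_cmap h hgen f
    rw [hw, hg] at this
    exact this
  -- I2 : ‖w‖ ≤ L
  have I2 : baseNorm w ≤ wordLength
      (Set.range fun i => ((FreeGroup.of i : FreeGroup I) :
        FreeGroup I ⧸ ⁅(FreeGroup.lift h).ker, (FreeGroup.lift h).ker⁆))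
      ((f : FreeGroup I) : FreeGroup I ⧸ ⁅(FreeGroup.lift h).ker, (FreeGroup.lift h).ker⁆) := by
    obtain ⟨l', hl1, hl2, hl3⟩ := exists_wordLength_list hgenQ
      ((f : FreeGroup I) : FreeGroup I ⧸ ⁅(FreeGroup.lift h).ker, (FreeGroup.lift h).ker⁆)
    obtain ⟨l, hm1, hm2, hm3⟩ := exists_letter_lift
      (QuotientGroup.mk' ⁅(FreeGroup.lift h).ker, (FreeGroup.lift h).ker⁆) l' hl2
    have hπ : ((l.prod : FreeGroup I) : FreeGroup I ⧸
        ⁅(FreeGroup.lift h).ker, (FreeGroup.lift h).ker⁆) = (f : FreeGroup I ⧸ _) := by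
      rw [← QuotientGroup.mk'_apply, map_list_prod, hm3, hl3]
    have hmem : (l.prod)⁻¹ * f ∈ ⁅(FreeGroup.lift h).ker, (FreeGroup.lift h).ker⁆ :=
      QuotientGroup.eq.mp hπ
    have hmu : mu h l.prod = mu h f := by
      have h3 := hker_mu hmem
      rw [MonoidHom.mem_ker, map_mul, map_inv] at h3
      exact inv_mul_eq_one.mp h3
    have hcl : cmap h l.prod = cmap h f := by rw [cmap, cmap, hmu]
    calc baseNorm w = baseNorm (cmap h l.prod) := by rw [hcl, hw]
      _ ≤ l.length := baseNorm_cmap_prod_le h l hm2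
      _ = _ := by rw [hm1, hl1]
  -- I3 : |g| ≤ L
  have I3 : wordLength (Set.range h) g ≤ wordLength
      (Set.range fun i => ((FreeGroup.of i : FreeGroup I) :
        FreeGroup I ⧸ ⁅(FreeGroup.lift h).ker, (FreeGroup.lift h).ker⁆))
      ((f : FreeGroup I) : FreeGroup I ⧸ ⁅(FreeGroup.lift h).ker, (FreeGroup.lift h).ker⁆) := by
    set φ := QuotientGroup.lift ⁅(FreeGroup.lift h).ker, (FreeGroup.lift h).ker⁆
      (FreeGroup.lift h) hNN_le with hφ
    have hXY : ∀ x ∈ (Set.range fun i => ((FreeGroup.of i : FreeGroup I) :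
        FreeGroup I ⧸ ⁅(FreeGroup.lift h).ker, (FreeGroup.lift h).ker⁆)),
        φ x ∈ Set.range h := by
      rintro x ⟨i, rfl⟩
      refine ⟨i, ?_⟩
      rw [hφ, QuotientGroup.lift_mk, FreeGroup.lift_apply_of]
    have := wordLength_map_le φ hXY hgenQ
      ((f : FreeGroup I) : FreeGroup I ⧸ ⁅(FreeGroup.lift h).ker, (FreeGroup.lift h).ker⁆)
    rw [hφ, QuotientGroup.lift_mk, hg] at this
    exact this
  rw [hg]
  constructor
  · intro hEq
    obtain ⟨l, hl1, hl2, hl3⟩ := exists_geodesic_word h hgen (baseNorm w) f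
      (by rw [hw]) (by rw [hg, hEq])
    have hmu0 : mu h ((l.prod)⁻¹ * f) = 1 := by
      rw [map_mul, map_inv, hl3, inv_mul_cancel]
    have h1 : FreeGroup.lift h ((l.prod)⁻¹ * f) = 1 := by
      rw [← rightHom_mu, hmu0]; erw [map_one]
    have h0 : cmap h ((l.prod)⁻¹ * f) = 0 := by
      rw [cmap, hmu0]
      rfl
    have hmemN' := mem_commutator_of_mu_trivial h hsur h1 h0
    have hππ : ((l.prod : FreeGroup I) : FreeGroup I ⧸
        ⁅(FreeGroup.lift h).ker, (FreeGroup.lift h).ker⁆) = (f : FreeGroup I ⧸ _) :=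
      QuotientGroup.eq.mpr hmemN'
    have hL : wordLength
        (Set.range fun i => ((FreeGroup.of i : FreeGroup I) :
          FreeGroup I ⧸ ⁅(FreeGroup.lift h).ker, (FreeGroup.lift h).ker⁆))
        ((f : FreeGroup I) : FreeGroup I ⧸ ⁅(FreeGroup.lift h).ker, (FreeGroup.lift h).ker⁆)
        ≤ baseNorm w := by
      have hlist := wordLength_le
        (Set.range fun i => ((FreeGroup.of i : FreeGroup I) :
          FreeGroup I ⧸ ⁅(FreeGroup.lift h).ker, (FreeGroup.lift h).ker⁆))
        (g := ((f : FreeGroup I) : FreeGroup I ⧸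
          ⁅(FreeGroup.lift h).ker, (FreeGroup.lift h).ker⁆))
        (l.map (QuotientGroup.mk' ⁅(FreeGroup.lift h).ker, (FreeGroup.lift h).ker⁆))
        (by
          intro y hy
          obtain ⟨x, hx, rfl⟩ := List.mem_map.mp hy
          obtain ⟨i, rfl | rfl⟩ := hl2 x hx
          · exact Or.inl ⟨i, rfl⟩
          · exact Or.inr ⟨i, by rw [map_inv, inv_inv]; rfl⟩)
        (by rw [← map_list_prod, QuotientGroup.mk'_apply, hππ])
      rw [List.length_map, hl1] at hlist
      exact hlist
    omega
  · intro hEq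
    omega

/-- Let `μ : F → A ≀ H` be the Magnus homomorphism `μ(x_i) = a_i h_i` and `ε : F → H` the
canonical projection with kernel `N`. If `μ(f) = w·g`, then `|g|_X = ‖w‖` if and only if the
word lengths of the images of `f` in `H ≅ F/N` and in `F/[N,N]`, with respect to the images of
the basis `(x_i)`, coincide. -/
theorem magnus_word_length_eq_iff {H : Type} [Group H] {I : Type}
    (h : I → H) (hgen : Subgroup.closure (Set.range h) = ⊤)
    (f : FreeGroup I) (w : H →₀ (I →₀ ℤ)) (g : H)
    (hf : FreeGroup.lift (fun i => wreathBase (Finsupp.single (1 : H)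
            (Finsupp.single i (1 : ℤ))) * wreathRight (h i)) f
          = wreathBase w * wreathRight g) :
    wordLength (Set.range h) g = baseNorm w ↔
      wordLength (Set.range h) ((FreeGroup.lift h) f) =
        wordLength
          (Set.range fun i => ((FreeGroup.of i : FreeGroup I) :
            FreeGroup I ⧸ ⁅(FreeGroup.lift h).ker, (FreeGroup.lift h).ker⁆))
          ((f : FreeGroup I) : FreeGroup I ⧸ ⁅(FreeGroup.lift h).ker, (FreeGroup.lift h).ker⁆) :=
  magnus_word_length_eq_iff' h hgen f w g hf
end

section
/- Let M = ℤ ≀ ℤ be the restricted wreath product of two infinite cyclic groups, generated by S = {x₀, y₀}, where x₀ generates the copy of ℤ in the base at the identity and y₀ generates the acting copy of ℤ. Then there exist a parallelogram-free subset P ⊆ M and constants c > 1 and λ > 0 such that for every n ∈ ℕ, #{ w ∈ P : λ·|w|_S < n + 1 } ≥ cⁿ. In particular, the finitely generated metabelian group M contains a parallelogram-free subset of exponential growth. -/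
/-- `(u₁, u₂, u₃, u₄)` is a parallelogram: cyclically consecutive entries are distinct and
`u₁u₂⁻¹u₃u₄⁻¹ = 1`. -/
def IsParallelogram {G : Type*} [Group G] (u₁ u₂ u₃ u₄ : G) : Prop :=
  u₁ ≠ u₂ ∧ u₂ ≠ u₃ ∧ u₃ ≠ u₄ ∧ u₄ ≠ u₁ ∧ u₁ * u₂⁻¹ * u₃ * u₄⁻¹ = 1

/-- A subset `P` of a group is parallelogram-free if it contains no parallelogram. -/
def ParallelogramFree {G : Type*} [Group G] (P : Set G) : Prop :=
  ¬ ∃ u₁ u₂ u₃ u₄ : G, u₁ ∈ P ∧ u₂ ∈ P ∧ u₃ ∈ P ∧ u₄ ∈ P ∧ IsParallelogram u₁ u₂ u₃ u₄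

/-- The wreath product `M = ℤ ≀ ℤ`. -/
noncomputable abbrev LampLighter : Type := WreathProd ℤ (Multiplicative ℤ)

/-- The generator of the copy of `ℤ` in the base of `ℤ ≀ ℤ` located at the identity. -/
noncomputable def llx : LampLighter := wreathBase (Finsupp.single (1 : Multiplicative ℤ) (1 : ℤ))

/-- The generator of the acting copy of `ℤ` in `ℤ ≀ ℤ`. -/
noncomputable def lly : LampLighter := wreathRight (Multiplicative.ofAdd (1 : ℤ))
open SemidirectProduct in
lemma wreathBase_mul {A : Type*} [AddCommGroup A] {H : Type*} [Group H] (v w : H →₀ A) :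
    (wreathBase (v + w) : WreathProd A H) = wreathBase v * wreathBase w := by
  unfold wreathBase
  rw [ofAdd_add, map_mul]
  rfl

open SemidirectProduct in
lemma wreathBase_conj {A : Type*} [AddCommGroup A] {H : Type*} [Group H] (b : H) (f : H →₀ A) :
    (wreathRight b * wreathBase f * (wreathRight b)⁻¹ : WreathProd A H)
      = wreathBase (wreathShift b f) := by
  unfold wreathBase wreathRight
  have key : ∀ x y : Multiplicative (H →₀ A) ⋊[wreathAction H A] H, x = inr b → y = inl (Multiplicative.ofAdd f) → x * y * x⁻¹ = inl (Multiplicative.ofAdd (wreathShift b f)) := by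
    rintro x y rfl rfl
    rw [show (inr b : Multiplicative (H →₀ A) ⋊[wreathAction H A] H)⁻¹ = inr b⁻¹ from (map_inv _ _).symm, ← inl_aut]
    rfl
  exact key _ _ rfl rfl

open SemidirectProduct in
lemma wreathBase_injective {A : Type*} [AddCommGroup A] {H : Type*} [Group H] :
    Function.Injective (wreathBase (A := A) (H := H)) := by
  intro v w h
  unfold wreathBase at h
  have := SemidirectProduct.inl_injective (φ := wreathAction H A) h
  exact Multiplicative.ofAdd.injective this

open SemidirectProduct in
lemma wreathRight_mul {A : Type*} [AddCommGroup A] {H : Type*} [Group H] (a b : H) :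
    (wreathRight (a * b) : WreathProd A H) = wreathRight a * wreathRight b := by
  unfold wreathRight; rw [map_mul]; rfl

lemma wreathBase_zpow {A : Type*} [AddCommGroup A] {H : Type*} [Group H] (v : H →₀ A) (c : ℤ) :
    (wreathBase (c • v) : WreathProd A H) = (wreathBase v) ^ c := by
  unfold wreathBase
  show SemidirectProduct.inl (Multiplicative.ofAdd (c • v))
      = (SemidirectProduct.inl (Multiplicative.ofAdd v) : _ ⋊[wreathAction H A] H) ^ c
  rw [← map_zpow, ← ofAdd_zsmul]

lemma wreathRight_zpow {A : Type*} [AddCommGroup A] {H : Type*} [Group H] (b : H) (c : ℤ) :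
    (wreathRight (b ^ c) : WreathProd A H) = (wreathRight b) ^ c := by
  unfold wreathRight
  show SemidirectProduct.inr (b ^ c)
      = (SemidirectProduct.inr b : Multiplicative (H →₀ A) ⋊[wreathAction H A] H) ^ c
  rw [map_zpow]

lemma wreathBase_zero {A : Type*} [AddCommGroup A] {H : Type*} [Group H] :
    (wreathBase (0 : H →₀ A) : WreathProd A H) = 1 := by
  unfold wreathBase
  rw [ofAdd_zero, map_one]; rfl

lemma llx_zpow (v : ℤ) : llx ^ v = wreathBase (Finsupp.single (1 : Multiplicative ℤ) v) := by
  rw [llx, ← wreathBase_zpow]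
  congr 1
  rw [Finsupp.smul_single, smul_eq_mul, mul_one]

lemma lly_zpow (t : ℤ) : lly ^ t = wreathRight (Multiplicative.ofAdd t) := by
  rw [lly, ← wreathRight_zpow]
  congr 1
  rw [← ofAdd_zsmul]
  norm_num

lemma closure_llxy_eq_top : Subgroup.closure ({llx, lly} : Set LampLighter) = ⊤ := by
  rw [eq_top_iff]
  intro g _
  set C := Subgroup.closure ({llx, lly} : Set LampLighter) with hC
  have hx : llx ∈ C := Subgroup.subset_closure (by simp)
  have hy : lly ∈ C := Subgroup.subset_closure (by simp)
  have hr : ∀ t : Multiplicative ℤ, (wreathRight t : LampLighter) ∈ C := by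
    intro t
    have := lly_zpow (Multiplicative.toAdd t)
    simp only [ofAdd_toAdd] at this
    rw [← this]; exact zpow_mem hy _
  have hsingle : ∀ (j : Multiplicative ℤ) (v : ℤ),
      (wreathBase (Finsupp.single j v) : LampLighter) ∈ C := by
    intro j v
    have hconj := wreathBase_conj (A := ℤ) (H := Multiplicative ℤ) j⁻¹
      (Finsupp.single (1 : Multiplicative ℤ) v)
    have hshift : wreathShift (j⁻¹) (Finsupp.single (1 : Multiplicative ℤ) v)
        = Finsupp.single j v := by
      ext x
      rw [wreathShift_apply]
      rcases eq_or_ne x j with rfl | hne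
      · simp
      · rw [Finsupp.single_apply, Finsupp.single_apply,
          if_neg (fun h => hne (mul_inv_eq_one.mp h.symm)), if_neg (fun h => hne h.symm)]
    rw [hshift] at hconj
    rw [← hconj]
    exact mul_mem (mul_mem (hr _) (by rw [← llx_zpow]; exact zpow_mem hx _)) (inv_mem (hr _))
  have hbase : ∀ w : (Multiplicative ℤ →₀ ℤ), (wreathBase w : LampLighter) ∈ C := by
    intro w
    induction w using Finsupp.induction with
    | zero => rw [wreathBase_zero]; exact one_mem _
    | single_add j v f _ _ ih =>
        rw [wreathBase_mul]
        exact mul_mem (hsingle j v) ih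
  have hg : g = wreathBase (Multiplicative.toAdd
      (SemidirectProduct.left (g : Multiplicative (Multiplicative ℤ →₀ ℤ)
        ⋊[wreathAction (Multiplicative ℤ) ℤ] Multiplicative ℤ)))
      * wreathRight (SemidirectProduct.right (g : Multiplicative (Multiplicative ℤ →₀ ℤ)
        ⋊[wreathAction (Multiplicative ℤ) ℤ] Multiplicative ℤ)) := by
    unfold wreathBase wreathRight
    rw [ofAdd_toAdd]
    exact (SemidirectProduct.inl_left_mul_inr_right _).symm
  rw [hg]
  exact mul_mem (hbase _) (hr _)

lemma derived_two : derivedSeries LampLighter 2 = ⊥ := by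
  have h1 : derivedSeries LampLighter 1 ≤
      (SemidirectProduct.rightHom (φ := wreathAction (Multiplicative ℤ) ℤ)).ker := by
    rw [derivedSeries_succ]
    apply Subgroup.commutator_le.mpr
    intro g _ h _
    apply MonoidHom.mem_ker.mpr
    exact (map_commutatorElement (SemidirectProduct.rightHom (φ := wreathAction (Multiplicative ℤ) ℤ)) g h).trans
      (commutatorElement_eq_one_iff_mul_comm.mpr (mul_comm _ _))
  rw [eq_bot_iff]
  show derivedSeries LampLighter (1 + 1) ≤ ⊥
  rw [derivedSeries_succ, Subgroup.commutator_le]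
  intro g hg h hh
  rw [Subgroup.mem_bot, commutatorElement_eq_one_iff_mul_comm]
  have hg' := h1 hg
  have hh' := h1 hh
  rw [← SemidirectProduct.range_inl_eq_ker_rightHom] at hg' hh'
  obtain ⟨a, rfl⟩ := hg'
  obtain ⟨b, rfl⟩ := hh'
  exact ((map_mul (SemidirectProduct.inl (φ := wreathAction (Multiplicative ℤ) ℤ)) a b).symm.trans
    ((congrArg _ (mul_comm a b)).trans (map_mul _ b a)))

/-! ### Word length upper bounds -/

def llS : Set LampLighter := {llx, lly}

def OkList (l : List LampLighter) : Prop := ∀ a ∈ l, a ∈ llS ∨ a⁻¹ ∈ llS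

def WL (g : LampLighter) (n : ℕ) : Prop :=
  ∃ l : List LampLighter, OkList l ∧ l.prod = g ∧ l.length ≤ n

lemma WL.wordLength_le {g : LampLighter} {n : ℕ} (h : WL g n) : wordLength llS g ≤ n := by
  obtain ⟨l, hok, hprod, hlen⟩ := h
  exact le_trans (Nat.sInf_le ⟨l, rfl, hok, hprod⟩) hlen

lemma WL.mono {g : LampLighter} {n m : ℕ} (h : WL g n) (hnm : n ≤ m) : WL g m := by
  obtain ⟨l, hok, hprod, hlen⟩ := h
  exact ⟨l, hok, hprod, hlen.trans hnm⟩

lemma WL.mul {g h : LampLighter} {n m : ℕ} (hg : WL g n) (hh : WL h m) : WL (g * h) (n + m) := by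
  obtain ⟨l1, hok1, hprod1, hlen1⟩ := hg
  obtain ⟨l2, hok2, hprod2, hlen2⟩ := hh
  refine ⟨l1 ++ l2, ?_, ?_, ?_⟩
  · intro a ha
    rcases List.mem_append.mp ha with h | h
    · exact hok1 a h
    · exact hok2 a h
  · rw [List.prod_append, hprod1, hprod2]
  · rw [List.length_append]; omega

lemma WL.one : WL 1 0 := ⟨[], by intro a ha; simp at ha, rfl, le_refl _⟩

lemma WL.gen_zpow {g : LampLighter} (hg : g ∈ llS) (c : ℤ) : WL (g ^ c) c.natAbs := by
  rcases le_or_gt 0 c with hc | hc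
  · refine ⟨List.replicate c.natAbs g, ?_, ?_, by simp⟩
    · intro a ha; rw [List.eq_of_mem_replicate ha]; exact Or.inl hg
    · rw [List.prod_replicate, ← zpow_natCast]
      congr 1; omega
  · refine ⟨List.replicate c.natAbs g⁻¹, ?_, ?_, by simp⟩
    · intro a ha; rw [List.eq_of_mem_replicate ha]; right; rw [inv_inv]; exact hg
    · rw [List.prod_replicate, inv_pow, ← zpow_natCast, ← inv_zpow, inv_zpow']
      congr 1; omega

lemma llx_mem : llx ∈ llS := Or.inl rfl
lemma lly_mem : lly ∈ llS := Or.inr rfl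

/-! ### Traversal words -/

noncomputable def trav : List ℤ → LampLighter
  | [] => 1
  | c :: cs => llx ^ c * lly⁻¹ * trav cs

noncomputable def srav : List ℤ → LampLighter
  | [] => 1
  | c :: cs => llx ^ c * lly * srav cs

noncomputable def FF : List ℤ → (Multiplicative ℤ →₀ ℤ)
  | [] => 0
  | c :: cs => Finsupp.single 1 c + wreathShift (Multiplicative.ofAdd (-1 : ℤ)) (FF cs)

noncomputable def GG : List ℤ → (Multiplicative ℤ →₀ ℤ)
  | [] => 0
  | c :: cs => Finsupp.single 1 c + wreathShift (Multiplicative.ofAdd (1 : ℤ)) (GG cs)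

lemma lly_inv : lly⁻¹ = wreathRight (Multiplicative.ofAdd (-1 : ℤ)) := by
  rw [lly]
  unfold wreathRight
  show (SemidirectProduct.inr (Multiplicative.ofAdd (1:ℤ)) : Multiplicative (Multiplicative ℤ →₀ ℤ)
      ⋊[wreathAction (Multiplicative ℤ) ℤ] Multiplicative ℤ)⁻¹ = _
  rw [← map_inv]
  rfl

lemma conj_neg (f : Multiplicative ℤ →₀ ℤ) :
    lly⁻¹ * wreathBase f * lly = wreathBase (wreathShift (Multiplicative.ofAdd (-1 : ℤ)) f) := by
  rw [← wreathBase_conj, ← lly_inv, inv_inv]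

lemma conj_pos (f : Multiplicative ℤ →₀ ℤ) :
    lly * wreathBase f * lly⁻¹ = wreathBase (wreathShift (Multiplicative.ofAdd (1 : ℤ)) f) := by
  rw [← wreathBase_conj, show wreathRight (Multiplicative.ofAdd (1:ℤ)) = lly from rfl]

lemma trav_eq (cs : List ℤ) : trav cs = wreathBase (FF cs) * lly ^ (-(cs.length : ℤ)) := by
  induction cs with
  | nil => simp [trav, FF, wreathBase_zero]
  | cons c cs ih =>
      rw [trav, ih, FF, wreathBase_mul, ← llx_zpow, ← conj_neg, List.length_cons]
      push_cast
      group

lemma srav_eq (cs : List ℤ) : srav cs = wreathBase (GG cs) * lly ^ (cs.length : ℤ) := by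
  induction cs with
  | nil => simp [srav, GG, wreathBase_zero]
  | cons c cs ih =>
      rw [srav, ih, GG, wreathBase_mul, ← llx_zpow, ← conj_pos, List.length_cons]
      push_cast
      group

lemma single_one_apply (c : ℤ) (i : ℤ) :
    (Finsupp.single (1 : Multiplicative ℤ) c) (Multiplicative.ofAdd i)
      = if i = 0 then c else 0 := by
  rw [Finsupp.single_apply]
  by_cases h : i = 0
  · subst h; rw [if_pos rfl, if_pos (by rfl)]
  · rw [if_neg h, if_neg (fun hh => h (by simpa using hh.symm))]

lemma FF_apply (cs : List ℤ) (i : ℤ) :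
    FF cs (Multiplicative.ofAdd i) = if 0 ≤ i then cs.getD i.toNat 0 else 0 := by
  induction cs generalizing i with
  | nil => simp [FF]
  | cons c cs ih =>
      rw [FF, Finsupp.add_apply, single_one_apply, wreathShift_apply]
      have : (Multiplicative.ofAdd i * Multiplicative.ofAdd (-1 : ℤ))
          = Multiplicative.ofAdd (i - 1) := by
        rw [← ofAdd_add]
        exact congrArg Multiplicative.ofAdd (by ring)
      rw [this, ih]
      rcases lt_trichotomy i 0 with h | h | h
      · rw [if_neg (by omega), if_neg (by omega), if_neg (by omega)]
        ring
      · subst h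
        rw [if_pos rfl, if_neg (by omega), if_pos le_rfl]
        simp
      · rw [if_neg (by omega), if_pos (by omega), if_pos (by omega), zero_add]
        have h1 : i.toNat = (i - 1).toNat + 1 := by omega
        rw [h1, List.getD_cons_succ]

lemma GG_apply (cs : List ℤ) (i : ℤ) :
    GG cs (Multiplicative.ofAdd i) = if i ≤ 0 then cs.getD (-i).toNat 0 else 0 := by
  induction cs generalizing i with
  | nil => simp [GG]
  | cons c cs ih =>
      rw [GG, Finsupp.add_apply, single_one_apply, wreathShift_apply]
      have : (Multiplicative.ofAdd i * Multiplicative.ofAdd (1 : ℤ))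
          = Multiplicative.ofAdd (i + 1) := by
        rw [← ofAdd_add]
      rw [this, ih]
      rcases lt_trichotomy i 0 with h | h | h
      · rw [if_neg (by omega), if_pos (by omega), if_pos (by omega), zero_add]
        have h1 : (-i).toNat = (-(i + 1)).toNat + 1 := by omega
        rw [h1, List.getD_cons_succ]
      · subst h; simp
      · rw [if_neg (by omega), if_neg (by omega), if_neg (by omega)]
        ring

lemma trav_WL (cs : List ℤ) (h : ∀ c ∈ cs, c.natAbs ≤ 2) : WL (trav cs) (3 * cs.length) := by
  induction cs with
  | nil => exact WL.one.mono (by simp)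
  | cons c cs ih =>
      have h1 : WL (llx ^ c) c.natAbs := WL.gen_zpow llx_mem c
      have h2 : WL lly⁻¹ 1 := by
        refine ⟨[lly⁻¹], ?_, by simp, by simp⟩
        intro a ha
        simp only [List.mem_singleton] at ha
        subst ha
        right; rw [inv_inv]; exact lly_mem
      have := (h1.mul h2).mul (ih (fun x hx => h x (List.mem_cons_of_mem _ hx)))
      refine this.mono ?_
      have := h c (List.mem_cons_self)
      simp only [List.length_cons]
      omega

lemma srav_WL (cs : List ℤ) (h : ∀ c ∈ cs, c.natAbs ≤ 2) : WL (srav cs) (3 * cs.length) := by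
  induction cs with
  | nil => exact WL.one.mono (by simp)
  | cons c cs ih =>
      have h1 : WL (llx ^ c) c.natAbs := WL.gen_zpow llx_mem c
      have h2 : WL lly 1 := by
        refine ⟨[lly], ?_, by simp, by simp⟩
        intro a ha
        simp only [List.mem_singleton] at ha
        subst ha
        exact Or.inl lly_mem
      have := (h1.mul h2).mul (ih (fun x hx => h x (List.mem_cons_of_mem _ hx)))
      refine this.mono ?_
      have := h c (List.mem_cons_self)
      simp only [List.length_cons]
      omega

lemma lly_WL (t : ℤ) : WL (lly ^ t) t.natAbs := WL.gen_zpow lly_mem t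

/-! ### The encoding of pairs (x, x²) of polynomials over ZMod 3 -/

noncomputable def gPos : ℕ ↪ Multiplicative ℤ :=
  ⟨fun n => Multiplicative.ofAdd (n : ℤ), by
    intro a b h
    have := Multiplicative.ofAdd.injective h
    exact_mod_cast this⟩

noncomputable def gNeg : ℕ ↪ Multiplicative ℤ :=
  ⟨fun n => Multiplicative.ofAdd (-1 - (n : ℤ)), by
    intro a b h
    have := Multiplicative.ofAdd.injective h
    omega⟩

noncomputable def EZ (p : ℕ →₀ ZMod 3) (g : ℕ ↪ Multiplicative ℤ) : Multiplicative ℤ →₀ ℤ :=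
  Finsupp.embDomain g (p.mapRange (fun a => (a.val : ℤ)) (by simp))

lemma EZ_apply (p : ℕ →₀ ZMod 3) (g : ℕ ↪ Multiplicative ℤ) (n : ℕ) :
    EZ p g (g n) = ((p n).val : ℤ) := by
  rw [EZ, Finsupp.embDomain_apply_self, Finsupp.mapRange_apply]

lemma EZ_not_mem (p : ℕ →₀ ZMod 3) (g : ℕ ↪ Multiplicative ℤ) (z : Multiplicative ℤ)
    (hz : z ∉ Set.range g) : EZ p g z = 0 :=
  Finsupp.embDomain_notin_range _ _ _ hz

noncomputable def bZ (x : Polynomial (ZMod 3)) : Multiplicative ℤ →₀ ℤ :=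
  EZ x.toFinsupp.coeff gPos + EZ (x * x).toFinsupp.coeff gNeg

lemma gPos_ne_range_gNeg (n : ℕ) : (gPos n) ∉ Set.range gNeg := by
  rintro ⟨m, hm⟩
  simp only [gPos, gNeg, Function.Embedding.coeFn_mk] at hm
  have := Multiplicative.ofAdd.injective hm
  omega

lemma gNeg_ne_range_gPos (n : ℕ) : (gNeg n) ∉ Set.range gPos := by
  rintro ⟨m, hm⟩
  simp only [gPos, gNeg, Function.Embedding.coeFn_mk] at hm
  have := Multiplicative.ofAdd.injective hm
  omega

lemma bZ_pos (x : Polynomial (ZMod 3)) (n : ℕ) :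
    bZ x (gPos n) = ((x.coeff n).val : ℤ) := by
  rw [bZ, Finsupp.add_apply, EZ_apply, EZ_not_mem _ _ _ (gPos_ne_range_gNeg n), add_zero]
  rfl

lemma bZ_neg (x : Polynomial (ZMod 3)) (n : ℕ) :
    bZ x (gNeg n) = (((x * x).coeff n).val : ℤ) := by
  rw [bZ, Finsupp.add_apply, EZ_apply, EZ_not_mem _ _ _ (gNeg_ne_range_gPos n), zero_add]
  rfl

lemma val_cast_eq (a : ZMod 3) : ((a.val : ℤ) : ZMod 3) = a := by
  push_cast
  exact ZMod.natCast_rightInverse a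

lemma bZ_injective : Function.Injective bZ := by
  intro x y h
  ext n
  have h1 : bZ x (gPos n) = bZ y (gPos n) := by rw [h]
  rw [bZ_pos, bZ_pos] at h1
  have := congrArg (fun z : ℤ => (z : ZMod 3)) h1
  simpa only [val_cast_eq] using this

lemma val_natcast (a : ZMod 3) : ((a.val : ℕ) : ZMod 3) = a := ZMod.natCast_rightInverse a

lemma two_ne_zero_poly : (2 : Polynomial (ZMod 3)) ≠ 0 := by
  intro h
  have h2 : (2 : ZMod 3) = 0 := by
    have := congrArg (fun p => Polynomial.coeff p 0) h
    simpa using this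
  exact absurd h2 (by decide)

lemma sidon {a b c d : Polynomial (ZMod 3)}
    (h : bZ a - bZ b + bZ c - bZ d = 0) : (a = b ∧ c = d) ∨ (a = d ∧ b = c) := by
  have hpt : ∀ z, bZ a z - bZ b z + bZ c z - bZ d z = 0 := by
    intro z
    have := congrFun (congrArg (fun f : Multiplicative ℤ →₀ ℤ => (f : Multiplicative ℤ → ℤ)) h) z
    simpa using this
  have E1 : a - b + c - d = 0 := by
    ext n
    have := hpt (gPos n)
    rw [bZ_pos, bZ_pos, bZ_pos, bZ_pos] at this
    have h3 := congrArg (fun z : ℤ => (z : ZMod 3)) this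
    push_cast at h3
    rw [val_natcast, val_natcast, val_natcast, val_natcast] at h3
    simp only [Polynomial.coeff_add, Polynomial.coeff_sub, Polynomial.coeff_zero]
    exact h3
  have E2 : a * a - b * b + c * c - d * d = 0 := by
    have : ∀ n : ℕ, (a*a).coeff n - (b*b).coeff n + (c*c).coeff n - (d*d).coeff n = 0 := by
      intro n
      have := hpt (gNeg n)
      rw [bZ_neg, bZ_neg, bZ_neg, bZ_neg] at this
      have h3 := congrArg (fun z : ℤ => (z : ZMod 3)) this
      push_cast at h3
      rw [val_natcast, val_natcast, val_natcast, val_natcast] at h3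
      exact h3
    ext n
    simp only [Polynomial.coeff_add, Polynomial.coeff_sub, Polynomial.coeff_zero]
    exact this n
  by_cases hab : a = b
  · subst hab
    left
    refine ⟨rfl, ?_⟩
    have : c - d = 0 := by linear_combination E1
    exact sub_eq_zero.mp this
  · right
    have hs : a - b = d - c := by linear_combination E1
    have hsq : (a + b) * (a - b) = (d + c) * (d - c) := by linear_combination E2
    rw [← hs] at hsq
    have hne : a - b ≠ 0 := sub_ne_zero.mpr hab
    have hsum : a + b = d + c := mul_right_cancel₀ hne hsq
    have h2a : 2 * a = 2 * d := by linear_combination hsum + hs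
    have had : a = d := mul_left_cancel₀ two_ne_zero_poly h2a
    refine ⟨had, ?_⟩
    rw [had] at hsum
    exact add_left_cancel hsum

/-! ### The word identity and length bound -/

lemma coeff_sq_zero {x : Polynomial (ZMod 3)} {n : ℕ} (hx : ∀ i, n ≤ i → x.coeff i = 0)
    {m : ℕ} (hm : 2 * n ≤ m) : (x * x).coeff m = 0 := by
  rw [Polynomial.coeff_mul]
  refine Finset.sum_eq_zero fun p hp => ?_
  rw [Finset.HasAntidiagonal.mem_antidiagonal] at hp
  rcases le_or_gt n p.1 with h | h
  · rw [hx p.1 h, zero_mul]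
  · rw [hx p.2 (by omega), mul_zero]

lemma getD_map_range (f : ℕ → ℤ) (n j : ℕ) :
    (((List.range n).map f).getD j 0) = if j < n then f j else 0 := by
  by_cases h : j < n
  · rw [if_pos h, List.getD_eq_getElem?_getD]
    simp [List.getElem?_map, List.getElem?_range h]
  · rw [if_neg h, List.getD_eq_default]
    simpa using h

lemma bZ_word (n : ℕ) (x : Polynomial (ZMod 3)) (hx : ∀ i, n ≤ i → x.coeff i = 0) :
    wreathBase (bZ x) =
      trav ((List.range n).map fun i => ((x.coeff i).val : ℤ)) * lly ^ (n : ℤ) *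
      (lly * (srav ((List.range (2*n)).map fun i => (((x*x).coeff i).val : ℤ)) *
        lly ^ (-(2*n : ℤ) - 1))) := by
  set csP := (List.range n).map (fun i => ((x.coeff i).val : ℤ)) with hcsP
  set csN := (List.range (2*n)).map (fun i => (((x*x).coeff i).val : ℤ)) with hcsN
  have lenP : csP.length = n := by simp [hcsP]
  have lenN : csN.length = 2*n := by simp [hcsN]
  rw [trav_eq, srav_eq, lenP, lenN]
  have key : wreathBase (FF csP) * lly ^ (-(n:ℤ)) * lly ^ (n:ℤ) *
      (lly * (wreathBase (GG csN) * lly ^ ((2*n : ℕ) : ℤ) * lly ^ (-(2*n:ℤ) - 1)))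
      = wreathBase (FF csP) * (lly * wreathBase (GG csN) * lly⁻¹) := by
    push_cast
    group
  rw [key, conj_pos, ← wreathBase_mul]
  congr 1
  ext z
  obtain ⟨i, rfl⟩ : ∃ i : ℤ, Multiplicative.ofAdd i = z := ⟨Multiplicative.toAdd z, rfl⟩
  rw [Finsupp.add_apply, wreathShift_apply]
  rw [show Multiplicative.ofAdd i * Multiplicative.ofAdd (1:ℤ) = Multiplicative.ofAdd (i+1) from
    by rw [← ofAdd_add]]
  rw [FF_apply, GG_apply]
  rcases le_or_gt 0 i with hi | hi
  · have hz : Multiplicative.ofAdd i = gPos i.toNat := by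
      simp only [gPos, Function.Embedding.coeFn_mk]
      change _ = Multiplicative.ofAdd _
      congr 1
      omega
    rw [hz, bZ_pos, if_pos hi, if_neg (by omega), add_zero, hcsP, getD_map_range]
    by_cases h2 : i.toNat < n
    · rw [if_pos h2]
    · rw [if_neg h2, hx i.toNat (by omega)]
      simp
  · have hz : Multiplicative.ofAdd i = gNeg (-1 - i).toNat := by
      simp only [gNeg, Function.Embedding.coeFn_mk]
      change _ = Multiplicative.ofAdd _
      congr 1
      omega
    rw [hz, bZ_neg, if_neg (by omega), if_pos (by omega), zero_add, hcsN, getD_map_range]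
    rw [show (-(i+1)).toNat = (-1-i).toNat from by omega]
    by_cases h2 : (-1-i).toNat < 2*n
    · rw [if_pos h2]
    · rw [if_neg h2, coeff_sq_zero hx (by omega)]
      simp

lemma val_natAbs_le (a : ZMod 3) : ((a.val : ℤ)).natAbs ≤ 2 := by
  have := ZMod.val_lt a
  omega

lemma bZ_WL (n : ℕ) (x : Polynomial (ZMod 3)) (hx : ∀ i, n ≤ i → x.coeff i = 0) :
    WL (wreathBase (bZ x)) (12 * n + 2) := by
  rw [bZ_word n x hx]
  have h1 : WL (trav ((List.range n).map fun i => ((x.coeff i).val : ℤ))) (3 * n) := by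
    have := trav_WL ((List.range n).map fun i => ((x.coeff i).val : ℤ)) ?_
    · simpa using this
    · intro c hc
      simp only [List.mem_map, List.mem_range] at hc
      obtain ⟨i, _, rfl⟩ := hc
      exact val_natAbs_le _
  have h2 : WL (lly ^ (n : ℤ)) n := (lly_WL _).mono (by simp)
  have h3 : WL lly 1 := by
    refine ⟨[lly], ?_, by simp, by simp⟩
    intro a ha
    simp only [List.mem_singleton] at ha
    subst ha
    exact Or.inl lly_mem
  have h4 : WL (srav ((List.range (2*n)).map fun i => (((x*x).coeff i).val : ℤ))) (6 * n) := by
    have := srav_WL ((List.range (2*n)).map fun i => (((x*x).coeff i).val : ℤ)) ?_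
    · refine this.mono ?_
      simp only [List.length_map, List.length_range]
      omega
    · intro c hc
      simp only [List.mem_map, List.mem_range] at hc
      obtain ⟨i, _, rfl⟩ := hc
      exact val_natAbs_le _
  have h5 : WL (lly ^ (-(2*n:ℤ) - 1)) (2 * n + 1) := by
    refine (lly_WL _).mono ?_
    omega
  have := (h1.mul h2).mul (h3.mul (h4.mul h5))
  refine this.mono (by omega)

/-! ### The parallelogram-free set -/

noncomputable def PP : Set LampLighter :=
  Set.range (fun x : Polynomial (ZMod 3) => wreathBase (bZ x))

lemma wreathBase_inv (v : Multiplicative ℤ →₀ ℤ) :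
    (wreathBase v : LampLighter)⁻¹ = wreathBase (-v) := by
  rw [eq_comm, eq_inv_iff_mul_eq_one, ← wreathBase_mul, neg_add_cancel, wreathBase_zero]

lemma PP_free : ParallelogramFree PP := by
  rintro ⟨u1, u2, u3, u4, ⟨x1, rfl⟩, ⟨x2, rfl⟩, ⟨x3, rfl⟩, ⟨x4, rfl⟩, h12, h23, h34, h41, heq⟩
  rw [wreathBase_inv, wreathBase_inv, ← wreathBase_mul, ← wreathBase_mul, ← wreathBase_mul]
    at heq
  have h0 : bZ x1 + -bZ x2 + bZ x3 + -bZ x4 = 0 :=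
    wreathBase_injective (heq.trans wreathBase_zero.symm)
  have hsd : bZ x1 - bZ x2 + bZ x3 - bZ x4 = 0 := by
    rw [sub_eq_add_neg, sub_eq_add_neg]
    exact h0
  rcases sidon hsd with ⟨h1, _⟩ | ⟨h1, _⟩
  · exact h12 (by rw [h1])
  · exact h41 (by rw [h1])

/-! ### Finiteness of balls -/

def llBall (L : ℕ) : Set LampLighter := {g | ∃ l, OkList l ∧ l.prod = g ∧ l.length ≤ L}

lemma letters_finite : {a : LampLighter | a ∈ llS ∨ a⁻¹ ∈ llS}.Finite := by
  apply Set.Finite.subset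
    ((((Set.finite_singleton (lly⁻¹ : LampLighter)).insert llx⁻¹).insert lly).insert llx)
  intro a ha
  have hinv : ∀ b : LampLighter, a⁻¹ = b → a = b⁻¹ := by
    intro b hb
    rw [← hb, inv_inv]
  simp only [llS, Set.mem_insert_iff, Set.mem_singleton_iff] at ha ⊢
  rcases ha with (h | h) | (h | h)
  · exact Or.inl h
  · exact Or.inr (Or.inl h)
  · exact Or.inr (Or.inr (Or.inl (hinv _ h)))
  · exact Or.inr (Or.inr (Or.inr (hinv _ h)))

lemma llBall_finite (L : ℕ) : (llBall L).Finite := by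
  induction L with
  | zero =>
      apply Set.Finite.subset (Set.finite_singleton 1)
      rintro g ⟨l, _, rfl, hlen⟩
      have : l = [] := List.length_eq_zero_iff.mp (Nat.le_zero.mp hlen)
      subst this
      simp
  | succ L ih =>
      have hsub : llBall (L + 1) ⊆
          insert 1 (Set.image2 (· * ·) {a : LampLighter | a ∈ llS ∨ a⁻¹ ∈ llS} (llBall L)) := by
        rintro g ⟨l, hok, rfl, hlen⟩
        cases l with
        | nil => left; simp
        | cons a t =>
            right
            refine ⟨a, hok a (List.mem_cons_self), t.prod,
              ⟨t, fun b hb => hok b (List.mem_cons_of_mem a hb), rfl, ?_⟩, by simp⟩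
            simp only [List.length_cons] at hlen
            omega
      exact Set.Finite.subset ((Set.Finite.image2 _ letters_finite ih).insert 1) hsub

lemma mem_llBall_of_wordLength {g : LampLighter} {L : ℕ} (h : wordLength llS g ≤ L) :
    g ∈ llBall L := by
  have hg : g ∈ Subgroup.closure llS := by
    rw [show llS = ({llx, lly} : Set LampLighter) from rfl, closure_llxy_eq_top]
    trivial
  have hg2 : g ∈ (Subgroup.closure llS).toSubmonoid := hg
  rw [Subgroup.closure_toSubmonoid] at hg2
  obtain ⟨l, hl, hprod⟩ := Submonoid.exists_list_of_mem_closure hg2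
  have hne : {n | ∃ l' : List LampLighter,
      l'.length = n ∧ (∀ x ∈ l', x ∈ llS ∨ x⁻¹ ∈ llS) ∧ l'.prod = g}.Nonempty := by
    refine ⟨l.length, l, rfl, ?_, hprod⟩
    intro x hx
    rcases hl x hx with h1 | h1
    · exact Or.inl h1
    · exact Or.inr (Set.mem_inv.mp h1)
  have hmem := Nat.sInf_mem hne
  obtain ⟨l', hlen, hok, hprod'⟩ := hmem
  refine ⟨l', hok, hprod', ?_⟩
  rw [hlen]
  exact h

/-! ### Counting -/

noncomputable def polyOf (n : ℕ) (v : Fin n → ZMod 3) : Polynomial (ZMod 3) :=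
  ∑ i : Fin n, Polynomial.C (v i) * Polynomial.X ^ (i : ℕ)

lemma polyOf_coeff (n : ℕ) (v : Fin n → ZMod 3) (j : ℕ) :
    (polyOf n v).coeff j = if h : j < n then v ⟨j, h⟩ else 0 := by
  rw [polyOf, Polynomial.finset_sum_coeff]
  simp only [Polynomial.coeff_C_mul, Polynomial.coeff_X_pow]
  by_cases h : j < n
  · rw [dif_pos h]
    rw [Finset.sum_eq_single (⟨j, h⟩ : Fin n)]
    · simp
    · intro i _ hne
      rw [if_neg, mul_zero]
      intro hji
      exact hne (by ext; simp [← hji])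
    · intro habs
      exact absurd (Finset.mem_univ _) habs
  · rw [dif_neg h]
    refine Finset.sum_eq_zero fun i _ => ?_
    rw [if_neg (by omega : ¬ j = (i : ℕ)), mul_zero]

lemma polyOf_coeff_zero (n : ℕ) (v : Fin n → ZMod 3) :
    ∀ i, n ≤ i → (polyOf n v).coeff i = 0 := by
  intro i hi
  rw [polyOf_coeff, dif_neg (by omega)]

theorem lamplighter_parallelogramFree_exponential_growth' :
    Subgroup.closure ({llx, lly} : Set LampLighter) = ⊤ ∧
    derivedSeries LampLighter 2 = ⊥ ∧
    ∃ (P : Set LampLighter) (c lam : ℝ), ParallelogramFree P ∧ 1 < c ∧ 0 < lam ∧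
      ∀ n : ℕ, c ^ n ≤
        (Nat.card {w : LampLighter //
          w ∈ P ∧ lam * (wordLength ({llx, lly} : Set LampLighter) w : ℝ) < n + 1} : ℝ) := by
  refine ⟨closure_llxy_eq_top, derived_two, PP, 3, 1/14, PP_free, by norm_num, by norm_num, ?_⟩
  intro n
  have hfin : {w : LampLighter | w ∈ PP ∧
      (1/14 : ℝ) * (wordLength ({llx, lly} : Set LampLighter) w : ℝ) < n + 1}.Finite := by
    apply Set.Finite.subset (llBall_finite (14 * n + 13))
    rintro w ⟨_, hw⟩
    apply mem_llBall_of_wordLength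
    have h2 : (wordLength llS w : ℝ) < 14 * (n + 1) := by
      have : (wordLength llS w : ℝ) = wordLength ({llx, lly} : Set LampLighter) w := rfl
      rw [this]
      linarith
    have h3 : (wordLength llS w : ℕ) < 14 * (n + 1) := by exact_mod_cast h2
    omega
  haveI hfinT : Finite {w : LampLighter //
      w ∈ PP ∧ (1/14 : ℝ) * (wordLength ({llx, lly} : Set LampLighter) w : ℝ) < n + 1} :=
    hfin.to_subtype
  have hlen : ∀ v : Fin n → ZMod 3,
      (1/14 : ℝ) * (wordLength ({llx, lly} : Set LampLighter)
        (wreathBase (bZ (polyOf n v))) : ℝ) < n + 1 := by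
    intro v
    have h1 : wordLength llS (wreathBase (bZ (polyOf n v))) ≤ 12 * n + 2 :=
      (bZ_WL n _ (polyOf_coeff_zero n v)).wordLength_le
    have h2 : (wordLength llS (wreathBase (bZ (polyOf n v))) : ℝ) ≤ 12 * (n : ℝ) + 2 := by
      exact_mod_cast h1
    have : (wordLength ({llx, lly} : Set LampLighter) (wreathBase (bZ (polyOf n v))) : ℝ)
        = (wordLength llS (wreathBase (bZ (polyOf n v))) : ℝ) := rfl
    rw [this]
    linarith
  have hcard : Nat.card (Fin n → ZMod 3) ≤ Nat.card {w : LampLighter //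
      w ∈ PP ∧ (1/14 : ℝ) * (wordLength ({llx, lly} : Set LampLighter) w : ℝ) < n + 1} := by
    apply Nat.card_le_card_of_injective
      (f := fun v : Fin n → ZMod 3 =>
        (⟨wreathBase (bZ (polyOf n v)), ⟨polyOf n v, rfl⟩, hlen v⟩ : {w : LampLighter //
          w ∈ PP ∧ (1/14 : ℝ) * (wordLength ({llx, lly} : Set LampLighter) w : ℝ) < n + 1}))
    intro v w h
    have hval := congrArg Subtype.val h
    simp only at hval
    have hp := bZ_injective (wreathBase_injective hval)
    funext i
    have hc := congrArg (fun p => Polynomial.coeff p (i : ℕ)) hp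
    simp only [polyOf_coeff, dif_pos i.isLt] at hc
    simpa using hc
  have h3 : Nat.card (Fin n → ZMod 3) = 3 ^ n := by
    simp [Nat.card_eq_fintype_card]
  rw [h3] at hcard
  calc (3 : ℝ) ^ n = ((3 ^ n : ℕ) : ℝ) := by push_cast; ring
    _ ≤ _ := by exact_mod_cast hcard
/-- The finitely generated metabelian group `M = ℤ ≀ ℤ`, with generating set `S = {x₀, y₀}`,
contains a parallelogram-free subset of exponential growth: there are `P ⊆ M`, `c > 1` and
`λ > 0` with `#{w ∈ P : λ|w|_S < n + 1} ≥ cⁿ` for all `n`. -/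
theorem lamplighter_parallelogramFree_exponential_growth :
    Subgroup.closure ({llx, lly} : Set LampLighter) = ⊤ ∧
    derivedSeries LampLighter 2 = ⊥ ∧
    ∃ (P : Set LampLighter) (c lam : ℝ), ParallelogramFree P ∧ 1 < c ∧ 0 < lam ∧
      ∀ n : ℕ, c ^ n ≤
        (Nat.card {w : LampLighter //
          w ∈ P ∧ lam * (wordLength ({llx, lly} : Set LampLighter) w : ℝ) < n + 1} : ℝ) :=
  lamplighter_parallelogramFree_exponential_growth'
end
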